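/- arXiv:0806.3258 — 14 statements merged into one kernel-verified Lean document; each statement's English description precedes it below -/
import Mathlib

section
/- Let A be a feasible assignment and let 𝒟 be an admissible family of subsets of Fin s. For any two distinct D₁, D₂ ∈ 𝒟 and any permutations ρ₁, ρ₂ of Fin n, the assignments p_{D₁}(A,ρ₁) and p_{D₂}(A,ρ₂) have the same set of vectors if and only if ρ₁ and ρ₂ are both the identity permutation. -/
/-- `swapVec u v D` is the vector equal to `v` in dimensions in `D` and to `u` otherwise. -/
def swapVec {s n : ℕ} (u v : Fin s → Fin n) (D : Finset (Fin s)) : Fin s → Fin n :=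
  fun j => if j ∈ D then v j else u j

/-- `pD A D ρ` is the assignment whose `i`-th vector is `swap (A i) (A (ρ i)) D`. -/
def pD {s n : ℕ} (A : Fin n → Fin s → Fin n) (D : Finset (Fin s)) (ρ : Equiv.Perm (Fin n)) :
    Fin n → Fin s → Fin n :=
  fun i => swapVec (A i) (A (ρ i)) D

/-- An assignment is feasible if in every dimension the coordinates are pairwise distinct. -/
def Feasible {s n : ℕ} (A : Fin n → Fin s → Fin n) : Prop :=
  ∀ j : Fin s, Function.Injective fun i => A i j

/-- The set of vectors of an assignment. -/
def vecSet {s n : ℕ} (A : Fin n → Fin s → Fin n) : Finset (Fin s → Fin n) :=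
  Finset.image A Finset.univ

/-- A family of subsets of dimensions is admissible if it contains neither `∅` nor the full
set of dimensions, and never contains both a set and its complement. -/
def Admissible (s : ℕ) (𝒟 : Finset (Finset (Fin s))) : Prop :=
  ∅ ∉ 𝒟 ∧ Finset.univ ∉ 𝒟 ∧ ∀ D ∈ 𝒟, Dᶜ ∉ 𝒟

theorem stmt_4 (s n : ℕ) (hs : 2 ≤ s) (hn : 1 ≤ n)
    (A : Fin n → Fin s → Fin n) (hA : Feasible A)
    (𝒟 : Finset (Finset (Fin s))) (h𝒟 : Admissible s 𝒟)
    (D₁ D₂ : Finset (Fin s)) (hD₁ : D₁ ∈ 𝒟) (hD₂ : D₂ ∈ 𝒟) (hne : D₁ ≠ D₂)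
    (ρ₁ ρ₂ : Equiv.Perm (Fin n)) :
    vecSet (pD A D₁ ρ₁) = vecSet (pD A D₂ ρ₂) ↔ ρ₁ = 1 ∧ ρ₂ = 1 := by
  obtain ⟨hEmp, huniv, hcompl⟩ := h𝒟
  constructor
  · intro h
    have key : ∀ i : Fin n, ∃ k : Fin n, pD A D₁ ρ₁ i = pD A D₂ ρ₂ k := by
      intro i
      have hmem : pD A D₁ ρ₁ i ∈ vecSet (pD A D₂ ρ₂) := by
        rw [← h]; exact Finset.mem_image_of_mem _ (Finset.mem_univ i)
      simpa [vecSet, eq_comm] using hmem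
    have hD₁ne : D₁.Nonempty := Finset.nonempty_iff_ne_empty.2 (fun e => hEmp (e ▸ hD₁))
    have hD₂ne : D₂.Nonempty := Finset.nonempty_iff_ne_empty.2 (fun e => hEmp (e ▸ hD₂))
    have hD₁nu : ∃ j, j ∉ D₁ := by
      by_contra hc
      push_neg at hc
      exact huniv ((by ext j; simpa using hc j : D₁ = Finset.univ) ▸ hD₁)
    have hD₂nu : ∃ j, j ∉ D₂ := by
      by_contra hc
      push_neg at hc
      exact huniv ((by ext j; simpa using hc j : D₂ = Finset.univ) ▸ hD₂)
    have hR14 : ∃ j, (j ∈ D₁ ↔ j ∈ D₂) := by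
      by_contra hc
      push_neg at hc
      apply hcompl D₁ hD₁
      have : D₁ᶜ = D₂ := by
        ext j
        have := hc j
        simp only [Finset.mem_compl]
        tauto
      exact this ▸ hD₂
    have main : ∀ i, ρ₁ i = i ∧ ρ₂ i = i := by
      intro i
      obtain ⟨k, heq⟩ := key i
      have coord : ∀ j, (if j ∈ D₁ then A (ρ₁ i) j else A i j)
          = (if j ∈ D₂ then A (ρ₂ k) j else A k j) := fun j => congrFun heq j
      have f1 : ∀ j, j ∈ D₁ → j ∈ D₂ → ρ₁ i = ρ₂ k := fun j h1 h2 =>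
        hA j (by simpa [h1, h2] using coord j)
      have f2 : ∀ j, j ∈ D₁ → j ∉ D₂ → ρ₁ i = k := fun j h1 h2 =>
        hA j (by simpa [h1, h2] using coord j)
      have f3 : ∀ j, j ∉ D₁ → j ∈ D₂ → i = ρ₂ k := fun j h1 h2 =>
        hA j (by simpa [h1, h2] using coord j)
      have f4 : ∀ j, j ∉ D₁ → j ∉ D₂ → i = k := fun j h1 h2 =>
        hA j (by simpa [h1, h2] using coord j)
      by_cases hR2 : ∃ j, j ∈ D₁ ∧ j ∉ D₂
      · obtain ⟨j2, hj2⟩ := hR2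
        have e2 : ρ₁ i = k := f2 j2 hj2.1 hj2.2
        by_cases hR3 : ∃ j, j ∈ D₂ ∧ j ∉ D₁
        · obtain ⟨j3, hj3⟩ := hR3
          have e3 : i = ρ₂ k := f3 j3 hj3.2 hj3.1
          obtain ⟨j0, hj0⟩ := hR14
          by_cases hj : j0 ∈ D₁
          · have e1 : ρ₁ i = ρ₂ k := f1 j0 hj (hj0.1 hj)
            have h1 : ρ₁ i = i := e1.trans e3.symm
            refine ⟨h1, ?_⟩
            have hk : k = i := h1 ▸ e2.symm
            rw [hk] at e3; exact e3.symm
          · have hj' : j0 ∉ D₂ := fun hh => hj (hj0.2 hh)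
            have e4 : i = k := f4 j0 hj hj'
            refine ⟨e2.trans e4.symm, ?_⟩
            rw [← e4] at e3; exact e3.symm
        · push_neg at hR3
          obtain ⟨j1, hj1⟩ := hD₂ne
          have hj1' : j1 ∈ D₁ := hR3 j1 hj1
          obtain ⟨j4, hj4⟩ := hD₁nu
          have hj4' : j4 ∉ D₂ := fun hh => hj4 (hR3 j4 hh)
          have e1 : ρ₁ i = ρ₂ k := f1 j1 hj1' hj1
          have e4 : i = k := f4 j4 hj4 hj4'
          have h1 : ρ₁ i = i := e2.trans e4.symm
          refine ⟨h1, ?_⟩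
          rw [← e4] at e1
          exact e1.symm.trans h1
      · push_neg at hR2
        by_cases hR3 : ∃ j, j ∈ D₂ ∧ j ∉ D₁
        · obtain ⟨j3, hj3⟩ := hR3
          have e3 : i = ρ₂ k := f3 j3 hj3.2 hj3.1
          obtain ⟨j1, hj1⟩ := hD₁ne
          have hj1' : j1 ∈ D₂ := hR2 j1 hj1
          obtain ⟨j4, hj4⟩ := hD₂nu
          have hj4' : j4 ∉ D₁ := fun hh => hj4 (hR2 j4 hh)
          have e1 : ρ₁ i = ρ₂ k := f1 j1 hj1 hj1'
          have e4 : i = k := f4 j4 hj4' hj4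
          rw [← e4] at e3 e1
          exact ⟨e1.trans e3.symm, e3.symm⟩
        · push_neg at hR3
          exact absurd (Finset.ext fun j => ⟨fun hj => hR2 j hj, fun hj => hR3 j hj⟩) hne
    exact ⟨Equiv.ext fun i => (main i).1, Equiv.ext fun i => (main i).2⟩
  · rintro ⟨rfl, rfl⟩
    have hid : ∀ D : Finset (Fin s), pD A D 1 = A := by
      intro D; funext i j; simp [pD, swapVec]
    rw [hid D₁, hid D₂]
end

section
/- Let A be a feasible assignment and let 𝒟 be a nonempty admissible family of subsets of Fin s. Then the dimensionwise neighborhood N_DV(A) = { set of vectors of p_D(A,ρ) : D ∈ 𝒟, ρ a permutation of Fin n } has cardinality exactly |𝒟| · (n! − 1) + 1. -/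
/-- The dimensionwise neighborhood of `A` with respect to the family `𝒟`. -/
def NDV {s n : ℕ} (A : Fin n → Fin s → Fin n) (𝒟 : Finset (Finset (Fin s))) :
    Set (Finset (Fin s → Fin n)) :=
  {S | ∃ D ∈ 𝒟, ∃ ρ : Equiv.Perm (Fin n), S = vecSet (pD A D ρ)}

lemma exists_perm_of_image_eq {n : ℕ} {α : Type*} [DecidableEq α] {f g : Fin n → α}
    (hf : Function.Injective f) (hg : Function.Injective g)
    (h : Finset.image f Finset.univ = Finset.image g Finset.univ) :
    ∃ π : Equiv.Perm (Fin n), ∀ i, f i = g (π i) := by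
  have hmem : ∀ i, ∃ k, g k = f i := by
    intro i
    have : f i ∈ Finset.image g Finset.univ :=
      h ▸ Finset.mem_image_of_mem f (Finset.mem_univ i)
    obtain ⟨k, _, hk⟩ := Finset.mem_image.mp this
    exact ⟨k, hk⟩
  choose φ hφ using hmem
  have hinj : Function.Injective φ := by
    intro i j hij
    apply hf
    rw [← hφ i, ← hφ j, hij]
  exact ⟨Equiv.ofBijective φ (Finite.injective_iff_bijective.mp hinj),
    fun i => (hφ i).symm⟩

lemma pD_injective {s n : ℕ} {A : Fin n → Fin s → Fin n} (hA : Feasible A)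
    {D : Finset (Fin s)} (hDu : D ≠ Finset.univ) (ρ : Equiv.Perm (Fin n)) :
    Function.Injective (pD A D ρ) := by
  obtain ⟨j, hj⟩ : ∃ j, j ∉ D := by
    by_contra h; push_neg at h; exact hDu (Finset.eq_univ_iff_forall.mpr h)
  intro i k hik
  have := congrFun hik j
  simp only [pD, swapVec, if_neg hj] at this
  exact hA j this

lemma pD_one {s n : ℕ} (A : Fin n → Fin s → Fin n) (D : Finset (Fin s)) :
    pD A D 1 = A := by
  funext i j
  simp [pD, swapVec]

lemma perm_eq_one_of_vecSet_eq {s n : ℕ} {A : Fin n → Fin s → Fin n} (hA : Feasible A)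
    {D : Finset (Fin s)} (hDne : D ≠ ∅) (hDu : D ≠ Finset.univ)
    {ρ : Equiv.Perm (Fin n)} (h : vecSet (pD A D ρ) = vecSet A) : ρ = 1 := by
  obtain ⟨j0, hj0⟩ := Finset.nonempty_iff_ne_empty.mpr hDne
  have hAinj : Function.Injective A := by
    intro i k hik
    exact hA j0 (congrFun hik j0)
  obtain ⟨π, hπ⟩ := exists_perm_of_image_eq (pD_injective hA hDu ρ) hAinj h
  obtain ⟨j1, hj1⟩ : ∃ j, j ∉ D := by
    by_contra hco; push_neg at hco; exact hDu (Finset.eq_univ_iff_forall.mpr hco)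
  have hπ1 : ∀ i, π i = i := by
    intro i
    have := congrFun (hπ i) j1
    simp only [pD, swapVec, if_neg hj1] at this
    exact (hA j1 this).symm
  refine Equiv.ext fun i => ?_
  have := congrFun (hπ i) j0
  simp only [pD, swapVec, if_pos hj0, hπ1 i] at this
  simpa using hA j0 this

lemma key_lemma {s n : ℕ} {A : Fin n → Fin s → Fin n} (hA : Feasible A)
    {D D' : Finset (Fin s)} (hDne : D ≠ ∅) (hD'ne : D' ≠ ∅)
    (hDu : D ≠ Finset.univ) (hD'u : D' ≠ Finset.univ) (hcompl : D' ≠ Dᶜ)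
    {ρ σ : Equiv.Perm (Fin n)}
    (h : vecSet (pD A D ρ) = vecSet (pD A D' σ)) :
    (ρ = 1 ∧ σ = 1) ∨ (D = D' ∧ ρ = σ) := by
  obtain ⟨π, hπ⟩ := exists_perm_of_image_eq (pD_injective hA hDu ρ)
    (pD_injective hA hD'u σ) h
  have hco : ∀ i j, (if j ∈ D then A (ρ i) j else A i j)
      = (if j ∈ D' then A (σ (π i)) j else A (π i) j) := by
    intro i j
    simpa [pD, swapVec] using congrFun (hπ i) j
  have h1 : ∀ j, j ∈ D → j ∈ D' → ∀ i, ρ i = σ (π i) := by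
    intro j hj hj' i
    have := hco i j; simp only [if_pos hj, if_pos hj'] at this
    exact hA j this
  have h2 : ∀ j, j ∈ D → j ∉ D' → ∀ i, ρ i = π i := by
    intro j hj hj' i
    have := hco i j; simp only [if_pos hj, if_neg hj'] at this
    exact hA j this
  have h3 : ∀ j, j ∉ D → j ∈ D' → ∀ i, i = σ (π i) := by
    intro j hj hj' i
    have := hco i j; simp only [if_neg hj, if_pos hj'] at this
    exact hA j this
  have h4 : ∀ j, j ∉ D → j ∉ D' → ∀ i, i = π i := by
    intro j hj hj' i
    have := hco i j; simp only [if_neg hj, if_neg hj'] at this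
    exact hA j this
  by_cases hDD : D = D'
  · subst hDD
    right
    refine ⟨rfl, ?_⟩
    obtain ⟨j0, hj0⟩ := Finset.nonempty_iff_ne_empty.mpr hDne
    obtain ⟨j1, hj1⟩ : ∃ j, j ∉ D := by
      by_contra hco'; push_neg at hco'; exact hDu (Finset.eq_univ_iff_forall.mpr hco')
    refine Equiv.ext fun i => ?_
    have hpi : π i = i := (h4 j1 hj1 hj1 i).symm
    have := h1 j0 hj0 hj0 i
    rw [hpi] at this
    exact this
  · left
    by_cases hsub : D ⊆ D'
    · -- D ⊊ D', so D' \ D nonempty and D ⊆ D ∩ D'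
      obtain ⟨j1, hj1D', hj1D⟩ : ∃ j, j ∈ D' ∧ j ∉ D := by
        obtain ⟨j, hj⟩ := Finset.exists_of_ssubset (hsub.ssubset_of_ne hDD)
        exact ⟨j, hj.1, hj.2⟩
      obtain ⟨j0, hj0⟩ := Finset.nonempty_iff_ne_empty.mpr hDne
      have hρ1 : ρ = 1 := by
        refine Equiv.ext fun i => ?_
        have := h1 j0 hj0 (hsub hj0) i
        rw [← h3 j1 hj1D hj1D' i] at this
        simpa using this
      refine ⟨hρ1, ?_⟩
      rw [hρ1, pD_one] at h
      exact perm_eq_one_of_vecSet_eq hA hD'ne hD'u h.symm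
    · obtain ⟨j2, hj2D, hj2D'⟩ : ∃ j, j ∈ D ∧ j ∉ D' := by
        obtain ⟨j, hj⟩ := Finset.not_subset.mp hsub
        exact ⟨j, hj.1, hj.2⟩
      -- π = ρ
      have hπρ : ∀ i, π i = ρ i := fun i => (h2 j2 hj2D hj2D' i).symm
      by_cases hsub' : D' ⊆ D
      · -- D' ⊊ D: σ = 1 then ρ = 1
        obtain ⟨j0, hj0⟩ := Finset.nonempty_iff_ne_empty.mpr hD'ne
        have hσ1 : σ = 1 := by
          refine Equiv.ext fun k => ?_
          have := h1 j0 (hsub' hj0) hj0 (ρ.symm k)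
          rw [hπρ] at this
          simp only [Equiv.apply_symm_apply] at this
          simpa using this.symm
        refine ⟨?_, hσ1⟩
        rw [hσ1, pD_one] at h
        exact perm_eq_one_of_vecSet_eq hA hDne hDu h
      · -- both D \ D' and D' \ D nonempty
        obtain ⟨j1, hj1D', hj1D⟩ : ∃ j, j ∈ D' ∧ j ∉ D := by
          obtain ⟨j, hj⟩ := Finset.not_subset.mp hsub'
          exact ⟨j, hj.1, hj.2⟩
        have hσπ : ∀ i, σ (π i) = i := fun i => (h3 j1 hj1D hj1D' i).symm
        have hπ1 : ∀ i, π i = i := by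
          by_cases hint : ∃ j, j ∈ D ∧ j ∈ D'
          · obtain ⟨j0, hj0D, hj0D'⟩ := hint
            intro i
            have := h1 j0 hj0D hj0D' i
            rw [hσπ i] at this
            rw [hπρ i]; exact this
          · by_cases hout : ∃ j, j ∉ D ∧ j ∉ D'
            · obtain ⟨j0, hj0D, hj0D'⟩ := hout
              exact fun i => (h4 j0 hj0D hj0D' i).symm
            · exfalso
              push_neg at hint hout
              apply hcompl
              ext j
              simp only [Finset.mem_compl]
              constructor
              · intro hj hjD; exact hint j hjD hj
              · intro hj; exact hout j hj
        have hρ1 : ρ = 1 := by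
          refine Equiv.ext fun i => ?_
          rw [← hπρ i, hπ1 i]; simp
        have hσ1 : σ = 1 := by
          refine Equiv.ext fun i => ?_
          have := hσπ i
          rw [hπ1 i] at this
          simpa using this
        exact ⟨hρ1, hσ1⟩

theorem stmt_5 (s n : ℕ) (hs : 2 ≤ s) (hn : 1 ≤ n)
    (A : Fin n → Fin s → Fin n) (hA : Feasible A)
    (𝒟 : Finset (Finset (Fin s))) (h𝒟 : Admissible s 𝒟) (h𝒟ne : 𝒟.Nonempty) :
    (NDV A 𝒟).ncard = 𝒟.card * (Nat.factorial n - 1) + 1 := by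
  classical
  obtain ⟨hne, hnu, hnc⟩ := h𝒟
  have hDne : ∀ D ∈ 𝒟, D ≠ ∅ := fun D hD h => hne (h ▸ hD)
  have hDu : ∀ D ∈ 𝒟, D ≠ Finset.univ := fun D hD h => hnu (h ▸ hD)
  set f : Finset (Fin s) × Equiv.Perm (Fin n) → Finset (Fin s → Fin n) :=
    fun p => vecSet (pD A p.1 p.2) with hf
  set T : Finset (Finset (Fin s → Fin n)) := Finset.image f (𝒟 ×ˢ Finset.univ) with hT
  have hNT : NDV A 𝒟 = ↑T := by
    ext S
    simp only [NDV, Set.mem_setOf_eq, hT, Finset.coe_image, Set.mem_image,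
      Finset.mem_coe, Finset.mem_product, Finset.mem_univ, and_true]
    constructor
    · rintro ⟨D, hD, ρ, rfl⟩; exact ⟨(D, ρ), hD, rfl⟩
    · rintro ⟨⟨D, ρ⟩, hD, rfl⟩; exact ⟨D, hD, ρ, rfl⟩
  rw [hNT, Set.ncard_coe_finset]
  obtain ⟨D₀, hD₀⟩ := h𝒟ne
  have hTins : T = insert (vecSet A)
      (Finset.image f (𝒟 ×ˢ (Finset.univ.erase (1 : Equiv.Perm (Fin n))))) := by
    ext S
    simp only [hT, Finset.mem_image, Finset.mem_insert, Finset.mem_product,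
      Finset.mem_univ, and_true, Finset.mem_erase]
    constructor
    · rintro ⟨⟨D, ρ⟩, hD, rfl⟩
      by_cases hρ : ρ = 1
      · left; simp [hf, hρ, pD_one]
      · right; exact ⟨(D, ρ), ⟨hD, hρ⟩, rfl⟩
    · rintro (rfl | ⟨⟨D, ρ⟩, ⟨hD, hρ⟩, rfl⟩)
      · exact ⟨(D₀, 1), hD₀, by simp [hf, pD_one]⟩
      · exact ⟨(D, ρ), hD, rfl⟩
  rw [hTins]
  have hnotmem : vecSet A ∉
      Finset.image f (𝒟 ×ˢ (Finset.univ.erase (1 : Equiv.Perm (Fin n)))) := by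
    simp only [Finset.mem_image, Finset.mem_product, Finset.mem_erase, Finset.mem_univ,
      and_true, not_exists]
    rintro ⟨D, ρ⟩ ⟨⟨hD, hρ⟩, hfe⟩
    exact hρ (perm_eq_one_of_vecSet_eq hA (hDne D hD) (hDu D hD) hfe)
  rw [Finset.card_insert_of_notMem hnotmem]
  have hinj : Set.InjOn f ↑(𝒟 ×ˢ (Finset.univ.erase (1 : Equiv.Perm (Fin n)))) := by
    rintro ⟨D, ρ⟩ hp ⟨D', σ⟩ hq hfe
    simp only [Finset.coe_product, Set.mem_prod, Finset.mem_coe, Finset.coe_erase,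
      Set.mem_diff, Finset.mem_product, Finset.mem_erase] at hp hq
    have hDm : D ∈ 𝒟 := hp.1
    have hD'm : D' ∈ 𝒟 := hq.1
    have hρ1 : ρ ≠ 1 := by
      have := hp.2.2
      simpa using this
    have hcompl : D' ≠ Dᶜ := fun h => hnc D hDm (h ▸ hD'm)
    rcases key_lemma hA (hDne D hDm) (hDne D' hD'm) (hDu D hDm) (hDu D' hD'm) hcompl hfe with
      ⟨h1, h2⟩ | ⟨h1, h2⟩
    · exact absurd h1 hρ1
    · exact Prod.ext h1 h2
  rw [Finset.card_image_of_injOn hinj, Finset.card_product,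
    Finset.card_erase_of_mem (Finset.mem_univ _), Finset.card_univ, Fintype.card_perm,
    Fintype.card_fin]
end

section
/- Let A be a feasible assignment, fix a distinguished dimension j₀ ∈ Fin s, and let I ⊆ Fin n with |I| = k. Then Wₐ(I), regarded as a set of n-element vector sets, has cardinality exactly (k!)^{s−1}. -/
/-- `W A j₀ I` : the set of vector sets of feasible assignments obtained from `A` by, in every
dimension `j ≠ j₀`, permuting the coordinates via a permutation fixing every index outside `I`. -/
def W {s n : ℕ} (A : Fin n → Fin s → Fin n) (j₀ : Fin s) (I : Finset (Fin n)) :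
    Set (Finset (Fin s → Fin n)) :=
  {S | ∃ A' : Fin n → Fin s → Fin n, Feasible A' ∧ vecSet A' = S ∧
    (∀ i, A' i j₀ = A i j₀) ∧
    ∀ j, j ≠ j₀ → ∃ ρ : Equiv.Perm (Fin n), (∀ i ∉ I, ρ i = i) ∧ ∀ i, A' i j = A (ρ i) j}

/-- The assignment built from a family of permutations, one for each dimension `≠ j₀`. -/
def Bfun {s n : ℕ} (A : Fin n → Fin s → Fin n) (j₀ : Fin s)
    (ρ : {j : Fin s // j ≠ j₀} → Equiv.Perm (Fin n)) : Fin n → Fin s → Fin n :=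
  fun i j => if h : j = j₀ then A i j₀ else A (ρ ⟨j, h⟩ i) j

theorem stmt_7 (s n : ℕ) (hs : 2 ≤ s) (hn : 1 ≤ n)
    (A : Fin n → Fin s → Fin n) (hA : Feasible A) (j₀ : Fin s)
    (I : Finset (Fin n)) (k : ℕ) (hI : I.card = k) :
    (W A j₀ I).ncard = Nat.factorial k ^ (s - 1) := by
  classical
  set T := {ρ : Equiv.Perm (Fin n) // ∀ i ∉ I, ρ i = i} with hT
  set F : ({j : Fin s // j ≠ j₀} → T) → Finset (Fin s → Fin n) :=
    fun ρ => vecSet (Bfun A j₀ fun j => (ρ j : Equiv.Perm (Fin n))) with hF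
  have hj₀coord : ∀ (ρ : {j : Fin s // j ≠ j₀} → Equiv.Perm (Fin n)) i,
      Bfun A j₀ ρ i j₀ = A i j₀ := by
    intro ρ i; simp [Bfun]
  have hBinj : ∀ ρ ρ' : {j : Fin s // j ≠ j₀} → Equiv.Perm (Fin n),
      vecSet (Bfun A j₀ ρ) = vecSet (Bfun A j₀ ρ') → ρ = ρ' := by
    intro ρ ρ' h
    have hB : Bfun A j₀ ρ = Bfun A j₀ ρ' := by
      funext i
      have hmem : Bfun A j₀ ρ i ∈ vecSet (Bfun A j₀ ρ') := by
        rw [← h]; exact Finset.mem_image_of_mem _ (Finset.mem_univ i)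
      obtain ⟨i', -, hi'⟩ := Finset.mem_image.1 hmem
      have : A i' j₀ = A i j₀ := by
        have := congrFun hi' j₀
        rwa [hj₀coord, hj₀coord] at this
      have hii : i' = i := hA j₀ this
      rw [← hi', hii]
    funext j
    obtain ⟨j, hj⟩ := j
    ext i
    have := congrFun (congrFun hB i) j
    simp only [Bfun, dif_neg hj] at this
    exact congrArg Fin.val (hA j this)
  have hWeq : W A j₀ I = Set.range F := by
    ext S
    constructor
    · rintro ⟨A', hfeas, hvec, hj0, hperm⟩
      refine ⟨fun j => ⟨(hperm j.1 j.2).choose, (hperm j.1 j.2).choose_spec.1⟩, ?_⟩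
      have : A' = Bfun A j₀ fun j => (hperm j.1 j.2).choose := by
        funext i j
        by_cases h : j = j₀
        · subst h; simp [Bfun, hj0]
        · simp only [Bfun, dif_neg h]
          exact (hperm j h).choose_spec.2 i
      simp only [hF, ← this, hvec]
    · rintro ⟨ρ, rfl⟩
      refine ⟨Bfun A j₀ fun j => (ρ j : Equiv.Perm (Fin n)), ?_, rfl, hj₀coord _, ?_⟩
      · intro j
        by_cases h : j = j₀
        · intro a b hab
          simp only [Bfun, dif_pos h] at hab
          exact hA j₀ hab
        · intro a b hab
          simp only [Bfun, dif_neg h] at hab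
          exact (ρ ⟨j, h⟩).1.injective (hA j hab)
      · intro j hj
        exact ⟨(ρ ⟨j, hj⟩ : Equiv.Perm (Fin n)), (ρ ⟨j, hj⟩).2, fun i => by
          simp [Bfun, dif_neg hj]⟩
  have hFinj : Function.Injective F := by
    intro ρ ρ' h
    have := hBinj _ _ h
    funext j
    exact Subtype.ext (congrFun this j)
  rw [hWeq, ← Set.image_univ, Set.ncard_image_of_injective _ hFinj, Set.ncard_univ,
    Nat.card_eq_fintype_card, Fintype.card_fun]
  have hcT : Fintype.card T = Nat.factorial k := by
    have e : Equiv.Perm {x : Fin n // x ∈ I} ≃ T :=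
      Equiv.Perm.subtypeEquivSubtypePerm (· ∈ I)
    rw [← Fintype.card_congr e, Fintype.card_perm, Fintype.card_coe, hI]
  have hcj : Fintype.card {j : Fin s // j ≠ j₀} = s - 1 := by
    simp [Fintype.card_subtype_compl]
  rw [hcT, hcj]
end

section
/- Let A be a feasible assignment with distinguished dimension j₀ ∈ Fin s. For any two distinct subsets I₁, I₂ ⊆ Fin n, the sets W'ₐ(I₁) and W'ₐ(I₂) are disjoint, and for every I ⊆ Fin n, Wₐ(I) is the union over all subsets I' ⊆ I of W'ₐ(I'). -/
/-- `W' A j₀ I` : those elements of `W A j₀ I` (indexed so that `A' i j₀ = A i j₀`) in which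
every vector indexed by `I` is modified. -/
def W' {s n : ℕ} (A : Fin n → Fin s → Fin n) (j₀ : Fin s) (I : Finset (Fin n)) :
    Set (Finset (Fin s → Fin n)) :=
  {S | ∃ A' : Fin n → Fin s → Fin n, Feasible A' ∧ vecSet A' = S ∧
    (∀ i, A' i j₀ = A i j₀) ∧
    (∀ j, j ≠ j₀ → ∃ ρ : Equiv.Perm (Fin n), (∀ i ∉ I, ρ i = i) ∧ ∀ i, A' i j = A (ρ i) j) ∧
    ∀ i ∈ I, A' i ≠ A i}

theorem stmt_8 (s n : ℕ) (hs : 2 ≤ s) (hn : 1 ≤ n)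
    (A : Fin n → Fin s → Fin n) (hA : Feasible A) (j₀ : Fin s) :
    (∀ I₁ I₂ : Finset (Fin n), I₁ ≠ I₂ → Disjoint (W' A j₀ I₁) (W' A j₀ I₂)) ∧
    (∀ I : Finset (Fin n), W A j₀ I = ⋃ I' ∈ I.powerset, W' A j₀ I') := by
  classical
  -- uniqueness of the representing assignment
  have uniq : ∀ B C : Fin n → Fin s → Fin n, (∀ i, B i j₀ = A i j₀) →
      (∀ i, C i j₀ = A i j₀) → vecSet B = vecSet C → B = C := by
    intro B C hB hC h
    funext i
    have hmem : B i ∈ vecSet C := by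
      rw [← h]; exact Finset.mem_image_of_mem _ (Finset.mem_univ i)
    obtain ⟨i', -, hi'⟩ := Finset.mem_image.mp hmem
    have hj : A i' j₀ = A i j₀ := by
      have := congrFun hi' j₀
      rwa [hC, hB] at this
    have : i' = i := hA j₀ hj
    rw [← hi', this]
  -- if the permutations fix outside I and i ∉ I then B i = A i
  have fixout : ∀ (B : Fin n → Fin s → Fin n) (I : Finset (Fin n)),
      (∀ i, B i j₀ = A i j₀) →
      (∀ j, j ≠ j₀ → ∃ ρ : Equiv.Perm (Fin n), (∀ i ∉ I, ρ i = i) ∧ ∀ i, B i j = A (ρ i) j) →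
      ∀ i ∉ I, B i = A i := by
    intro B I hBj hperm i hi
    funext j
    by_cases h : j = j₀
    · subst h; exact hBj i
    · obtain ⟨ρ, hfix, hρ⟩ := hperm j h
      rw [hρ i, hfix i hi]
  constructor
  · intro I₁ I₂ hne
    rw [Set.disjoint_left]
    rintro S ⟨B, hBf, hBS, hBj, hBperm, hBI⟩ ⟨C, hCf, hCS, hCj, hCperm, hCI⟩
    have hBC : B = C := uniq B C hBj hCj (hBS.trans hCS.symm)
    subst hBC
    apply hne
    ext i
    constructor
    · intro hi
      by_contra hi2
      exact hBI i hi (fixout B I₂ hCj hCperm i hi2)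
    · intro hi
      by_contra hi2
      exact hCI i hi (fixout B I₁ hBj hBperm i hi2)
  · intro I
    ext S
    simp only [Set.mem_iUnion, Finset.mem_powerset]
    constructor
    · rintro ⟨B, hBf, hBS, hBj, hBperm⟩
      refine ⟨I.filter (fun i => B i ≠ A i), Finset.filter_subset _ _,
        B, hBf, hBS, hBj, ?_, ?_⟩
      · intro j hj
        obtain ⟨ρ, hfix, hρ⟩ := hBperm j hj
        refine ⟨ρ, ?_, hρ⟩
        intro i hi
        by_cases hiI : i ∈ I
        · have hBA : B i = A i := by
            by_contra h
            exact hi (Finset.mem_filter.mpr ⟨hiI, h⟩)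
          have : A (ρ i) j = A i j := by rw [← hρ i, hBA]
          exact hA j this
        · exact hfix i hiI
      · intro i hi
        exact (Finset.mem_filter.mp hi).2
    · rintro ⟨I', hI', B, hBf, hBS, hBj, hBperm, -⟩
      refine ⟨B, hBf, hBS, hBj, ?_⟩
      intro j hj
      obtain ⟨ρ, hfix, hρ⟩ := hBperm j hj
      exact ⟨ρ, fun i hi => hfix i (fun h => hi (hI' h)), hρ⟩
end

section
/- Let A be a feasible assignment with distinguished dimension j₀ ∈ Fin s. For any two subsets I₁, I₂ ⊆ Fin n with |I₁| = |I₂|, the sets W'ₐ(I₁) and W'ₐ(I₂) have the same cardinality; i.e., |W'ₐ(I)| depends only on |I|. -/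
section aux

/-- The column permutation of a feasible assignment in dimension `j`. -/
noncomputable def colPerm {s n : ℕ} (A : Fin n → Fin s → Fin n) (hA : Feasible A) (j : Fin s) :
    Equiv.Perm (Fin n) :=
  Equiv.ofBijective (fun i => A i j) (Finite.injective_iff_bijective.mp (hA j))

@[simp] lemma colPerm_apply {s n : ℕ} (A : Fin n → Fin s → Fin n) (hA) (j : Fin s) (i : Fin n) :
    colPerm A hA j i = A i j := rfl

/-- `phiF c σ` rewires a vector coordinatewise: in dimension `j` it conjugates `σ` by `c j`. -/
def phiF {s n : ℕ} (c : Fin s → Equiv.Perm (Fin n)) (σ : Equiv.Perm (Fin n)) :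
    (Fin s → Fin n) → (Fin s → Fin n) :=
  fun v j => c j (σ ((c j).symm (v j)))

lemma phiF_inv {s n : ℕ} (c : Fin s → Equiv.Perm (Fin n)) (σ : Equiv.Perm (Fin n)) (v) :
    phiF c σ⁻¹ (phiF (s := s) (n := n) c σ v) = v := by
  funext j; simp [phiF]

lemma phiF_injective {s n : ℕ} (c : Fin s → Equiv.Perm (Fin n)) (σ : Equiv.Perm (Fin n)) :
    Function.Injective (phiF (s := s) (n := n) c σ) :=
  Function.LeftInverse.injective (g := phiF c σ⁻¹) (phiF_inv c σ)

lemma key_mapsTo {s n : ℕ} (A : Fin n → Fin s → Fin n) (hA : Feasible A) (j₀ : Fin s)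
    (I₁ I₂ : Finset (Fin n)) (σ : Equiv.Perm (Fin n)) (hσ : ∀ i, i ∈ I₁ ↔ σ i ∈ I₂)
    (S : Finset (Fin s → Fin n)) (hS : S ∈ W' A j₀ I₁) :
    S.image (phiF (colPerm A hA) σ) ∈ W' A j₀ I₂ := by
  obtain ⟨A', hF, rfl, hj0, hperm, hne⟩ := hS
  set c := colPerm A hA with hc
  refine ⟨fun i => phiF c σ (A' (σ.symm i)), ?_, ?_, ?_, ?_, ?_⟩
  · -- feasibility
    intro j i1 i2 h
    simp only [phiF] at h
    have h1 : A' (σ.symm i1) j = A' (σ.symm i2) j := by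
      have := (c j).symm.injective (σ.injective ((c j).injective h))
      exact this
    have := hF j h1
    simpa using σ.symm.injective this
  · -- vecSet equality
    ext v
    simp only [vecSet, Finset.mem_image, Finset.mem_univ, true_and]
    constructor
    · rintro ⟨i, rfl⟩
      exact ⟨A' (σ.symm i), ⟨σ.symm i, rfl⟩, rfl⟩
    · rintro ⟨u, ⟨i, rfl⟩, rfl⟩
      exact ⟨σ i, by rw [Equiv.symm_apply_apply]⟩
  · -- j₀ coordinates
    intro i
    simp only [phiF, hj0]
    rw [show A (σ.symm i) j₀ = c j₀ (σ.symm i) from rfl, Equiv.symm_apply_apply,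
      Equiv.apply_symm_apply]
    rfl
  · -- permutations in other dimensions
    intro j hj
    obtain ⟨ρ, hρ1, hρ2⟩ := hperm j hj
    refine ⟨σ * ρ * σ⁻¹, ?_, ?_⟩
    · intro i hi
      have h1 : σ⁻¹ i ∉ I₁ := fun h => hi (by simpa using (hσ (σ⁻¹ i)).mp h)
      simp [Equiv.Perm.mul_apply, hρ1 (σ.symm i) h1]
    · intro i
      simp only [phiF, hρ2]
      rw [show A (ρ (σ.symm i)) j = c j (ρ (σ.symm i)) from rfl, Equiv.symm_apply_apply]
      rfl
  · -- vectors indexed by I₂ are modified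
    intro i hi hcontra
    have hmem : σ.symm i ∈ I₁ := by
      rw [hσ (σ.symm i)]; simpa using hi
    refine hne (σ.symm i) hmem ?_
    funext j
    have hj : phiF c σ (A' (σ.symm i)) j = A i j := congrFun hcontra j
    have hAij : A i j = phiF c σ (A (σ.symm i)) j := by
      simp only [phiF]
      rw [show A (σ.symm i) j = c j (σ.symm i) from rfl, Equiv.symm_apply_apply,
        Equiv.apply_symm_apply]
      rfl
    rw [hAij] at hj
    simp only [phiF] at hj
    exact (c j).symm.injective (σ.injective ((c j).injective hj))

end aux

theorem stmt_9 (s n : ℕ) (hs : 2 ≤ s) (hn : 1 ≤ n)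
    (A : Fin n → Fin s → Fin n) (hA : Feasible A) (j₀ : Fin s)
    (I₁ I₂ : Finset (Fin n)) (hcard : I₁.card = I₂.card) :
    (W' A j₀ I₁).ncard = (W' A j₀ I₂).ncard := by
  classical
  -- build a permutation σ with i ∈ I₁ ↔ σ i ∈ I₂
  have hccard : I₁ᶜ.card = I₂ᶜ.card := by
    simp [Finset.card_compl, hcard]
  let e : {x // x ∈ I₁} ≃ {x // x ∈ I₂} := Finset.equivOfCardEq hcard
  let e' : {x // ¬ x ∈ I₁} ≃ {x // ¬ x ∈ I₂} :=
    ((Equiv.subtypeEquivRight (fun x => (Finset.mem_compl (s := I₁)).symm)).trans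
      (Finset.equivOfCardEq hccard)).trans
      (Equiv.subtypeEquivRight (fun x => (Finset.mem_compl (s := I₂))))
  let σ : Equiv.Perm (Fin n) := Equiv.subtypeCongr e e'
  have hσ : ∀ i, i ∈ I₁ ↔ σ i ∈ I₂ := by
    intro i
    by_cases h : i ∈ I₁
    · have hval : σ i = (e ⟨i, h⟩ : Fin n) := by
        simp [σ, Equiv.subtypeCongr, Equiv.sumCompl_symm_apply_of_pos h]
      rw [hval]
      exact iff_of_true h (e ⟨i, h⟩).2
    · have hval : σ i = (e' ⟨i, h⟩ : Fin n) := by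
        simp [σ, Equiv.subtypeCongr, Equiv.sumCompl_symm_apply_of_neg h]
      rw [hval]
      exact iff_of_false h (e' ⟨i, h⟩).2
  have hσ' : ∀ i, i ∈ I₂ ↔ σ⁻¹ i ∈ I₁ := by
    intro i
    rw [hσ (σ⁻¹ i)]
    simp
  set c := colPerm A hA with hc
  have himg : (fun S => S.image (phiF c σ)) '' (W' A j₀ I₁) = W' A j₀ I₂ := by
    apply Set.Subset.antisymm
    · rintro _ ⟨S, hS, rfl⟩
      exact key_mapsTo A hA j₀ I₁ I₂ σ hσ S hS
    · intro S hS
      refine ⟨S.image (phiF c σ⁻¹), key_mapsTo A hA j₀ I₂ I₁ σ⁻¹ hσ' S hS, ?_⟩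
      show (S.image (phiF c σ⁻¹)).image (phiF c σ) = S
      rw [Finset.image_image]
      have : (phiF c σ ∘ phiF c σ⁻¹) = id := by
        funext v
        have := phiF_inv c σ⁻¹ v
        rwa [inv_inv] at this
      rw [this, Finset.image_id]
  rw [← himg]
  exact (Set.ncard_image_of_injective _ (Finset.image_injective (phiF_injective c σ))).symm
end

section
/- Let A be a feasible assignment with distinguished dimension j₀ ∈ Fin s, and let I ⊆ Fin n with |I| = 2. Then |W'ₐ(I)| = 2^{s−1} − 1. -/
lemma pD_apply {s n : ℕ} (A : Fin n → Fin s → Fin n) (D : Finset (Fin s))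
    (ρ : Equiv.Perm (Fin n)) (i : Fin n) (j : Fin s) :
    pD A D ρ i j = if j ∈ D then A (ρ i) j else A i j := rfl

/-- A permutation fixing everything outside `{a, b}` is `1` or `Equiv.swap a b`. -/
lemma perm_two {n : ℕ} {a b : Fin n} (hab : a ≠ b) (ρ : Equiv.Perm (Fin n))
    (h : ∀ i, i ≠ a → i ≠ b → ρ i = i) : ρ = 1 ∨ ρ = Equiv.swap a b := by
  have hmem : ∀ x : Fin n, x = a ∨ x = b → ρ x = a ∨ ρ x = b := by
    intro x _
    by_contra hc
    push_neg at hc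
    have := h (ρ x) hc.1 hc.2
    have hx : ρ x = x := ρ.injective this
    rcases ‹x = a ∨ x = b› with rfl | rfl
    · exact hc.1 hx
    · exact hc.2 hx
  rcases hmem a (Or.inl rfl) with ha | ha
  · left
    have hb : ρ b = b := by
      rcases hmem b (Or.inr rfl) with hb | hb
      · exact absurd (ρ.injective (ha.trans hb.symm)) hab
      · exact hb
    ext i
    by_cases hia : i = a
    · simp [hia, ha]
    by_cases hib : i = b
    · simp [hib, hb]
    · simp [h i hia hib]
  · right
    have hb : ρ b = a := by
      rcases hmem b (Or.inr rfl) with hb | hb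
      · exact hb
      · exact absurd (ρ.injective (ha.trans hb.symm)) hab
    ext i
    by_cases hia : i = a
    · simp [hia, ha]
    by_cases hib : i = b
    · simp [hib, hb, Equiv.swap_apply_right]
    · simp [h i hia hib, Equiv.swap_apply_of_ne_of_ne hia hib]

theorem stmt_10 (s n : ℕ) (hs : 2 ≤ s) (hn : 2 ≤ n)
    (A : Fin n → Fin s → Fin n) (hA : Feasible A) (j₀ : Fin s)
    (I : Finset (Fin n)) (hI : I.card = 2) :
    (W' A j₀ I).ncard = 2 ^ (s - 1) - 1 := by
  obtain ⟨a, b, hab, rfl⟩ := Finset.card_eq_two.mp hI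
  set σ := Equiv.swap a b with hσdef
  have hσa : σ a = b := Equiv.swap_apply_left a b
  have hσb : σ b = a := Equiv.swap_apply_right a b
  have hAab : ∀ j : Fin s, A a j ≠ A b j := fun j h => hab (hA j h)
  set T : Finset (Finset (Fin s)) := (Finset.univ.erase j₀).powerset.erase ∅ with hTdef
  have hTmem : ∀ D : Finset (Fin s), D ∈ T ↔ D.Nonempty ∧ j₀ ∉ D := by
    intro D
    simp only [hTdef, Finset.mem_erase, Finset.mem_powerset, Finset.subset_erase,
      Finset.nonempty_iff_ne_empty]
    constructor
    · rintro ⟨h1, _, h2⟩; exact ⟨h1, h2⟩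
    · rintro ⟨h1, h2⟩; exact ⟨h1, Finset.subset_univ D, h2⟩
  -- feasibility of all swapped assignments
  have hfeas : ∀ D : Finset (Fin s), Feasible (pD A D σ) := by
    intro D j i i' h
    simp only [pD_apply] at h
    by_cases hj : j ∈ D
    · simp only [hj, if_true] at h
      exact σ.injective (hA j h)
    · simp only [hj, if_false] at h
      exact hA j h
  have key : W' A j₀ {a, b} = ↑(T.image (fun D => vecSet (pD A D σ))) := by
    ext S
    simp only [Finset.coe_image, Set.mem_image, Finset.mem_coe]
    constructor
    · rintro ⟨A', hfeasA', hvec, hj₀, hperm, hchange⟩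
      refine ⟨Finset.univ.filter (fun j => A' a j ≠ A a j ∧ j ≠ j₀), ?_, ?_⟩
      · rw [hTmem]
        constructor
        · have hne := hchange a (by simp)
          rw [Function.ne_iff] at hne
          obtain ⟨j, hj⟩ := hne
          have hjj₀ : j ≠ j₀ := fun h => hj (h ▸ hj₀ a)
          exact ⟨j, by simp [hj, hjj₀]⟩
        · simp
      · have hAeq : A' = pD A (Finset.univ.filter (fun j => A' a j ≠ A a j ∧ j ≠ j₀)) σ := by
          funext i j
          rw [pD_apply]
          by_cases hjj₀ : j = j₀
          · subst hjj₀
            simp only [Finset.mem_filter]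
            rw [if_neg (by tauto)]
            exact hj₀ i
          obtain ⟨ρ, hfix, hval⟩ := hperm j hjj₀
          have hfix' : ∀ i, i ≠ a → i ≠ b → ρ i = i := by
            intro i hia hib
            exact hfix i (by simp [hia, hib])
          rcases perm_two hab ρ hfix' with rfl | rfl
          · have hja : A' a j = A a j := hval a
            rw [if_neg (by simp [hja])]
            exact hval i
          · have hja : A' a j ≠ A a j := by
              rw [hval a, hσa]
              exact fun h => hAab j h.symm
            rw [if_pos (by simp [hja, hjj₀])]
            exact hval i
        rw [← hvec]
        exact (congrArg vecSet hAeq).symm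
    · rintro ⟨D, hD, rfl⟩
      rw [hTmem] at hD
      obtain ⟨hDne, hj₀D⟩ := hD
      refine ⟨pD A D σ, hfeas D, rfl, ?_, ?_, ?_⟩
      · intro i; rw [pD_apply, if_neg hj₀D]
      · intro j hj
        by_cases hjD : j ∈ D
        · refine ⟨σ, ?_, ?_⟩
          · intro i hi
            simp only [Finset.mem_insert, Finset.mem_singleton, not_or] at hi
            exact Equiv.swap_apply_of_ne_of_ne hi.1 hi.2
          · intro i; rw [pD_apply, if_pos hjD]
        · exact ⟨1, fun i _ => rfl, fun i => by rw [pD_apply, if_neg hjD]; rfl⟩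
      · intro i hi heq
        obtain ⟨j, hj⟩ := hDne
        have h := congrFun heq j
        rw [pD_apply, if_pos hj] at h
        have hσi : σ i = i := hA j h
        simp only [Finset.mem_insert, Finset.mem_singleton] at hi
        rcases hi with rfl | rfl
        · exact hab (hσa ▸ hσi).symm
        · exact hab (hσb ▸ hσi)
  rw [key, Set.ncard_coe_finset]
  have hinj : Set.InjOn (fun D => vecSet (pD A D σ)) ↑T := by
    intro D hD D' hD' heq
    simp only [Finset.mem_coe, hTmem] at hD hD'
    have h1 : pD A D σ a ∈ vecSet (pD A D σ) :=
      Finset.mem_image_of_mem _ (Finset.mem_univ a)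
    rw [show vecSet (pD A D σ) = vecSet (pD A D' σ) from heq] at h1
    obtain ⟨i, _, hi⟩ := Finset.mem_image.mp h1
    have hij₀ := congrFun hi j₀
    rw [pD_apply, pD_apply, if_neg hD'.2, if_neg hD.2] at hij₀
    have : i = a := hA j₀ hij₀
    subst this
    ext j
    have hij := congrFun hi j
    rw [pD_apply, pD_apply, hσa] at hij
    constructor
    · intro hm
      by_contra h2
      rw [if_pos hm, if_neg h2] at hij
      exact hAab j hij
    · intro hm
      by_contra h2
      rw [if_pos hm, if_neg h2] at hij
      exact hAab j hij.symm
  rw [Finset.card_image_of_injOn hinj]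
  have hcard : (Finset.univ.erase j₀ : Finset (Fin s)).card = s - 1 := by
    rw [Finset.card_erase_of_mem (Finset.mem_univ j₀), Finset.card_univ, Fintype.card_fin]
  rw [hTdef, Finset.card_erase_of_mem (Finset.mem_powerset.mpr (Finset.empty_subset _)),
    Finset.card_powerset, hcard]
end

section
/- Let A be a feasible assignment with distinguished dimension j₀ ∈ Fin s, and let I ⊆ Fin n with |I| = 3. Then |W'ₐ(I)| = 6^{s−1} − 3·2^{s−1} + 2. -/
namespace Stmt11Aux

variable {n : ℕ} (I : Finset (Fin n))

lemma mem_pres (σ : Equiv.Perm (Fin n)) (h : ∀ i ∉ I, σ i = i) (x : Fin n) :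
    x ∈ I ↔ σ x ∈ I := by
  constructor
  · intro hx
    by_contra hsx
    have h1 : σ (σ x) = σ x := h (σ x) hsx
    have h2 : σ x = x := σ.injective h1
    rw [h2] at hsx
    exact hsx hx
  · intro hx
    by_contra hxI
    rw [h x hxI] at hx
    exact hxI hx

def e1 : {σ : Equiv.Perm (Fin n) // ∀ i ∉ I, σ i = i} ≃ Equiv.Perm {x // x ∈ I} where
  toFun σ := σ.1.subtypePerm (fun x => (mem_pres I σ.1 σ.2 x).symm)
  invFun π := ⟨Equiv.Perm.ofSubtype π, fun i hi => Equiv.Perm.ofSubtype_apply_of_not_mem π hi⟩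
  left_inv := by
    rintro ⟨σ, h⟩
    ext i
    by_cases hi : i ∈ I
    · simp [Equiv.Perm.ofSubtype_apply_of_mem _ hi]
    · simp [Equiv.Perm.ofSubtype_apply_of_not_mem _ hi, h i hi]
  right_inv := by
    intro π
    ext x
    simp [Equiv.Perm.ofSubtype_apply_of_mem _ x.2]

variable (hI : I.card = 3)

noncomputable def eI : {x // x ∈ I} ≃ Fin 3 :=
  Fintype.equivFinOfCardEq (by rw [Fintype.card_coe, hI])

noncomputable def eS : {σ : Equiv.Perm (Fin n) // ∀ i ∉ I, σ i = i} ≃ Equiv.Perm (Fin 3) :=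
  (e1 I).trans (Equiv.permCongr (eI I hI))

lemma eS_apply (σ : {σ : Equiv.Perm (Fin n) // ∀ i ∉ I, σ i = i}) (x : {x // x ∈ I}) :
    eS I hI σ (eI I hI x) = eI I hI ⟨σ.1 x.1, (mem_pres I σ.1 σ.2 x.1).1 x.2⟩ := by
  simp [eS, e1, Equiv.permCongr_apply]

lemma eS_fix_iff (σ : {σ : Equiv.Perm (Fin n) // ∀ i ∉ I, σ i = i}) (x : {x // x ∈ I}) :
    σ.1 x.1 = x.1 ↔ eS I hI σ (eI I hI x) = eI I hI x := by
  rw [eS_apply I hI σ x, (eI I hI).injective.eq_iff, Subtype.ext_iff]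

end Stmt11Aux

lemma countP (m : ℕ) (hm : 1 ≤ m) :
    Nat.card {g : Fin m → Equiv.Perm (Fin 3) // ∀ i, ∃ j, g j i ≠ i} = 6 ^ m - 3 * 2 ^ m + 2 := by
  classical
  rw [Nat.card_eq_fintype_card, Fintype.card_subtype]
  set C : Fin 3 → Finset (Fin m → Equiv.Perm (Fin 3)) :=
    fun i => Finset.univ.filter (fun g => ∀ j, g j i = i) with hC
  have hCcard : ∀ i : Fin 3, (C i).card = 2 ^ m := by
    intro i
    have h2 : ∀ i : Fin 3,
        (Finset.univ.filter fun σ : Equiv.Perm (Fin 3) => σ i = i).card = 2 := by decide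
    have : C i = Fintype.piFinset (fun _ : Fin m =>
        Finset.univ.filter fun σ : Equiv.Perm (Fin 3) => σ i = i) := by
      ext g; simp [hC, Fintype.mem_piFinset]
    rw [this, Fintype.card_piFinset]
    simp [h2 i]
  have hfix : ∀ σ : Equiv.Perm (Fin 3), ∀ i k : Fin 3, i ≠ k → σ i = i → σ k = k → σ = 1 := by
    decide
  have hpair : ∀ i k : Fin 3, i ≠ k → C i ∩ C k = {fun _ => 1} := by
    intro i k hik
    ext g
    simp only [Finset.mem_inter, hC, Finset.mem_filter, Finset.mem_univ, true_and,
      Finset.mem_singleton]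
    constructor
    · rintro ⟨h1, h2⟩
      funext j
      exact hfix (g j) i k hik (h1 j) (h2 j)
    · rintro rfl
      simp
  have hUcard : (Finset.univ : Finset (Fin m → Equiv.Perm (Fin 3))).card = 6 ^ m := by
    rw [Finset.card_univ, Fintype.card_fun]
    norm_num [Fintype.card_perm, Nat.factorial]
  have h01 : (C 0 ∪ C 1).card + 1 = 2 ^ m + 2 ^ m := by
    have := Finset.card_union_add_card_inter (C 0) (C 1)
    rwa [hpair 0 1 (by decide), Finset.card_singleton, hCcard 0, hCcard 1] at this
  have h012 : (C 0 ∪ C 1 ∪ C 2).card + 2 = 3 * 2 ^ m := by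
    have h := Finset.card_union_add_card_inter (C 0 ∪ C 1) (C 2)
    rw [Finset.union_inter_distrib_right, hpair 0 2 (by decide), hpair 1 2 (by decide),
      Finset.union_self, Finset.card_singleton, hCcard 2] at h
    calc (C 0 ∪ C 1 ∪ C 2).card + 2 = ((C 0 ∪ C 1 ∪ C 2).card + 1) + 1 := by ring
      _ = ((C 0 ∪ C 1).card + 2 ^ m) + 1 := by rw [h]
      _ = ((C 0 ∪ C 1).card + 1) + 2 ^ m := by ring
      _ = (2 ^ m + 2 ^ m) + 2 ^ m := by rw [h01]
      _ = 3 * 2 ^ m := by ring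
  have hcompl : Finset.univ.filter (fun g : Fin m → Equiv.Perm (Fin 3) => ∀ i, ∃ j, g j i ≠ i)
      = Finset.univ \ (C 0 ∪ C 1 ∪ C 2) := by
    ext g
    simp only [Finset.mem_filter, Finset.mem_univ, true_and, Finset.mem_sdiff,
      Finset.mem_union, hC, Finset.mem_filter]
    constructor
    · intro h hmem
      rcases hmem with (h0 | h1) | h2
      · obtain ⟨j, hj⟩ := h 0; exact hj (h0 j)
      · obtain ⟨j, hj⟩ := h 1; exact hj (h1 j)
      · obtain ⟨j, hj⟩ := h 2; exact hj (h2 j)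
    · intro h i
      by_contra hc
      push_neg at hc
      apply h
      have : i = 0 ∨ i = 1 ∨ i = 2 := by omega
      rcases this with rfl | rfl | rfl
      · exact Or.inl (Or.inl hc)
      · exact Or.inl (Or.inr hc)
      · exact Or.inr hc
  rw [hcompl, Finset.card_sdiff_of_subset (Finset.subset_univ _), hUcard,
    Nat.eq_sub_of_add_eq h012]
  have h2b : 2 ≤ 3 * 2 ^ m := le_trans (by norm_num)
    (Nat.mul_le_mul_left 3 Nat.one_le_two_pow)
  have h36 : 3 * 2 ^ m ≤ 6 ^ m := by
    have h6 : (6 : ℕ) ^ m = 3 ^ m * 2 ^ m := by rw [← Nat.mul_pow]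
    have h3 : 3 ≤ 3 ^ m :=
      calc (3:ℕ) = 3 ^ 1 := by norm_num
      _ ≤ 3 ^ m := Nat.pow_le_pow_right (by norm_num) hm
    rw [h6]
    exact Nat.mul_le_mul_right _ h3
  exact tsub_tsub_assoc h36 h2b

open Stmt11Aux in
lemma card_F (s n : ℕ) (hs : 2 ≤ s) (j₀ : Fin s) (I : Finset (Fin n)) (hI : I.card = 3) :
    Nat.card {f : Fin s → Equiv.Perm (Fin n) //
      f j₀ = 1 ∧ (∀ j, ∀ i ∉ I, f j i = i) ∧ ∀ i ∈ I, ∃ j, f j i ≠ i}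
    = 6 ^ (s - 1) - 3 * 2 ^ (s - 1) + 2 := by
  classical
  have hm : 1 ≤ s - 1 := by omega
  have hcardJ : Fintype.card {j : Fin s // j ≠ j₀} = s - 1 := by
    rw [Fintype.card_subtype_compl, Fintype.card_subtype_eq, Fintype.card_fin]
  set eJ : Fin (s - 1) ≃ {j : Fin s // j ≠ j₀} := (Fintype.equivFinOfCardEq hcardJ).symm with heJ
  set E := Stmt11Aux.eS I hI with hE
  set eIx := Stmt11Aux.eI I hI with heIx
  refine Eq.trans (Nat.card_congr ?_) (countP (s - 1) hm)
  refine Equiv.ofBijective (fun f =>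
    ⟨fun j' => E ⟨f.1 (eJ j').1, fun i hi => f.2.2.1 _ i hi⟩, ?_⟩) ⟨?_, ?_⟩
  · -- property: every point of Fin 3 is moved by some coordinate
    obtain ⟨f, h1, h2, h3⟩ := f
    intro i
    set x : {x // x ∈ I} := eIx.symm i with hx
    obtain ⟨j, hj⟩ := h3 x.1 x.2
    have hjne : j ≠ j₀ := by
      rintro rfl
      rw [h1] at hj
      exact hj rfl
    refine ⟨eJ.symm ⟨j, hjne⟩, ?_⟩
    simp only [Equiv.apply_symm_apply]
    have hix : i = eIx x := (Equiv.apply_symm_apply eIx i).symm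
    rw [hix]
    intro hfix
    exact hj ((Stmt11Aux.eS_fix_iff I hI ⟨f j, fun i hi => h2 j i hi⟩ x).mpr hfix)
  · -- injectivity
    rintro ⟨f, hf1, hf2, hf3⟩ ⟨f', hf'1, hf'2, hf'3⟩ heq
    simp only [Subtype.mk.injEq] at heq ⊢
    funext j
    by_cases h : j = j₀
    · rw [h, hf1, hf'1]
    · have h2 := congrFun heq (eJ.symm ⟨j, h⟩)
      have h3 := E.injective h2
      rw [Subtype.ext_iff] at h3
      simpa using h3
  · -- surjectivity
    rintro ⟨g, hg⟩
    refine ⟨⟨fun j => if h : j = j₀ then 1 else (E.symm (g (eJ.symm ⟨j, h⟩))).1,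
      by simp, ?_, ?_⟩, ?_⟩
    · intro j i hi
      by_cases h : j = j₀
      · simp [h]
      · simp only [dif_neg h]
        exact (E.symm (g (eJ.symm ⟨j, h⟩))).2 i hi
    · intro i hi
      obtain ⟨j', hj'⟩ := hg (eIx ⟨i, hi⟩)
      refine ⟨(eJ j').1, ?_⟩
      have hne := (eJ j').2
      simp only [dif_neg hne, Subtype.coe_eta, Equiv.symm_apply_apply]
      intro hfix
      apply hj'
      have := (Stmt11Aux.eS_fix_iff I hI (E.symm (g j')) ⟨i, hi⟩).mp hfix
      rwa [Equiv.apply_symm_apply] at this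
    · apply Subtype.ext
      funext j'
      simp only
      have hne := (eJ j').2
      have hval : (if h : (eJ j').1 = j₀ then 1
          else (E.symm (g (eJ.symm ⟨(eJ j').1, h⟩))).1) = (E.symm (g j')).1 := by
        rw [dif_neg hne, Subtype.coe_eta, Equiv.symm_apply_apply]
      have hsub : (⟨(if h : (eJ j').1 = j₀ then 1
          else (E.symm (g (eJ.symm ⟨(eJ j').1, h⟩))).1 : Equiv.Perm (Fin n)),
          fun i hi => (by
            by_cases h : (eJ j').1 = j₀
            · simp [h]
            · simp only [dif_neg h]
              exact (E.symm (g (eJ.symm ⟨(eJ j').1, h⟩))).2 i hi : (if h : (eJ j').1 = j₀ then 1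
          else (E.symm (g (eJ.symm ⟨(eJ j').1, h⟩))).1 : Equiv.Perm (Fin n)) i = i)⟩ :
          {σ : Equiv.Perm (Fin n) // ∀ i ∉ I, σ i = i}) = E.symm (g j') :=
        Subtype.ext hval
      rw [hsub]  -- may not match syntactically; fallback below
      exact Equiv.apply_symm_apply E (g j')

theorem stmt_11 (s n : ℕ) (hs : 2 ≤ s) (hn : 3 ≤ n)
    (A : Fin n → Fin s → Fin n) (hA : Feasible A) (j₀ : Fin s)
    (I : Finset (Fin n)) (hI : I.card = 3) :
    (W' A j₀ I).ncard = 6 ^ (s - 1) - 3 * 2 ^ (s - 1) + 2 := by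
  classical
  set F : Set (Fin s → Equiv.Perm (Fin n)) :=
    {f | f j₀ = 1 ∧ (∀ j, ∀ i ∉ I, f j i = i) ∧ ∀ i ∈ I, ∃ j, f j i ≠ i} with hF
  set Φ : (Fin s → Equiv.Perm (Fin n)) → (Fin n → Fin s → Fin n) :=
    fun f i j => A (f j i) j with hΦ
  have himg : W' A j₀ I = (fun f => vecSet (Φ f)) '' F := by
    ext S
    constructor
    · rintro ⟨A', hfeas, hvec, hj0, hρ, hne⟩
      choose ρ hρ1 hρ2 using hρ
      refine ⟨fun j => if h : j = j₀ then 1 else ρ j h, ?_, ?_⟩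
      · have hfe : ∀ j i, A' i j =
            A ((if h : j = j₀ then 1 else ρ j h) i) j := by
          intro j i
          by_cases h : j = j₀
          · subst h
            simpa using hj0 i
          · rw [dif_neg h]
            exact hρ2 j h i
        refine ⟨by simp, ?_, ?_⟩
        · intro j i hi
          by_cases h : j = j₀
          · simp [h]
          · simp only [dif_neg h]
            exact hρ1 j h i hi
        · intro i hi
          have : ∃ j, A' i j ≠ A i j := by
            by_contra hc
            push_neg at hc
            exact hne i hi (funext hc)
          obtain ⟨j, hj⟩ := this
          refine ⟨j, fun hfix => hj ?_⟩
          rw [hfe j i, hfix]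
      · rw [← hvec]
        have hΦA : Φ (fun j => if h : j = j₀ then 1 else ρ j h) = A' := by
          funext i j
          by_cases h : j = j₀
          · subst h; simpa [hΦ] using (hj0 i).symm
          · simp only [hΦ, dif_neg h]
            exact (hρ2 j h i).symm
        show vecSet _ = vecSet A'
        rw [hΦA]
    · rintro ⟨f, ⟨h1, h2, h3⟩, rfl⟩
      refine ⟨Φ f, ?_, rfl, ?_, ?_, ?_⟩
      · intro j a b hab
        have : A (f j a) j = A (f j b) j := hab
        exact (f j).injective (hA j this)
      · intro i
        simp [hΦ, h1]
      · intro j _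
        exact ⟨f j, h2 j, fun i => rfl⟩
      · intro i hi heq
        obtain ⟨j, hj⟩ := h3 i hi
        apply hj
        have hcf : A (f j i) j = A i j := congrFun heq j
        exact hA j hcf
  have hinj : Set.InjOn (fun f => vecSet (Φ f)) F := by
    rintro f ⟨hf1, hf2, hf3⟩ g ⟨hg1, hg2, hg3⟩ heq
    have heq' : vecSet (Φ f) = vecSet (Φ g) := heq
    have hpt : ∀ i, Φ f i = Φ g i := by
      intro i
      have hmem : Φ f i ∈ vecSet (Φ g) := by
        rw [← heq']
        exact Finset.mem_image_of_mem _ (Finset.mem_univ i)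
      rw [vecSet, Finset.mem_image] at hmem
      obtain ⟨i', -, hi'⟩ := hmem
      have hj0 : A (g j₀ i') j₀ = A (f j₀ i) j₀ := congrFun hi' j₀
      rw [hf1, hg1] at hj0
      have : i' = i := hA j₀ hj0
      rw [← hi', this]
    funext j
    apply Equiv.ext
    intro i
    have := congrFun (hpt i) j
    have hAe : A (f j i) j = A (g j i) j := this
    exact hA j hAe
  rw [himg, Set.ncard_image_of_injOn hinj, ← Nat.card_coe_set_eq]
  exact card_F s n hs j₀ I hI
end

section
/- Let A be a feasible assignment with distinguished dimension j₀ ∈ Fin s, and let n ≥ 2. The 2-opt neighborhood N₂opt(A), the union of Wₐ(I) over all I ⊆ Fin n with |I| = 2 (regarded as a set of n-element vector sets), has cardinality exactly 1 + C(n,2)·(2^{s−1} − 1). -/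
/-- The `k`-opt neighborhood of `A`: the union of `W A j₀ I` over all `I` of cardinality `k`. -/
def Nkopt {s n : ℕ} (A : Fin n → Fin s → Fin n) (j₀ : Fin s) (k : ℕ) :
    Set (Finset (Fin s → Fin n)) :=
  ⋃ (I : Finset (Fin n)) (_ : I.card = k), W A j₀ I


open Finset

def swapOf {n : ℕ} (P : Finset (Fin n)) : Equiv.Perm (Fin n) :=
  if h : P.Nonempty then Equiv.swap (P.min' h) (P.max' h) else 1

lemma swapOf_pair {n : ℕ} {a b : Fin n} (hab : a ≠ b) :
    swapOf ({a, b} : Finset (Fin n)) = Equiv.swap a b := by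
  have hne : ({a, b} : Finset (Fin n)).Nonempty := ⟨a, by simp⟩
  rw [swapOf, dif_pos hne]
  have hmin := Finset.min'_mem _ hne
  have hmax := Finset.max'_mem _ hne
  simp only [Finset.mem_insert, Finset.mem_singleton] at hmin hmax
  have hmm : ({a,b}:Finset (Fin n)).min' hne ≠ ({a,b}:Finset (Fin n)).max' hne := by
    intro h
    have ha : a ∈ ({a,b}:Finset (Fin n)) := by simp
    have hb : b ∈ ({a,b}:Finset (Fin n)) := by simp
    have h1 := Finset.min'_le _ a ha
    have h2 := Finset.le_max' _ a ha
    have h3 := Finset.min'_le _ b hb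
    have h4 := Finset.le_max' _ b hb
    exact hab (le_antisymm (le_trans h2 (h ▸ h3)) (le_trans h4 (h ▸ h1)))
  rcases hmin with h1 | h1 <;> rcases hmax with h2 | h2
  · exact absurd (h1.trans h2.symm) hmm
  · rw [h1, h2]
  · rw [h1, h2, Equiv.swap_comm]
  · exact absurd (h1.trans h2.symm) hmm

lemma vecSet_eq_imp {s n : ℕ} {A B B' : Fin n → Fin s → Fin n} {j₀ : Fin s}
    (hA : Function.Injective fun i => A i j₀)
    (hB : ∀ i, B i j₀ = A i j₀) (hB' : ∀ i, B' i j₀ = A i j₀)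
    (h : vecSet B = vecSet B') : B = B' := by
  funext i
  have hmem : B i ∈ vecSet B' := h ▸ (Finset.mem_image_of_mem B (Finset.mem_univ i))
  rw [vecSet, Finset.mem_image] at hmem
  obtain ⟨k, -, hk⟩ := hmem
  have hkey : A k j₀ = A i j₀ := by rw [← hB' k, ← hB i, hk]
  rw [← hk, hA hkey]

lemma perm_fix_pair {n : ℕ} {a b : Fin n} (hab : a ≠ b) (ρ : Equiv.Perm (Fin n))
    (h : ∀ i ∉ ({a, b} : Finset (Fin n)), ρ i = i) : ρ = 1 ∨ ρ = Equiv.swap a b := by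
  have hmem : ∀ x, x ∈ ({a,b}:Finset (Fin n)) → ρ x ∈ ({a,b}:Finset (Fin n)) := by
    intro x hx
    by_contra hc
    have h1 : ρ (ρ x) = ρ x := h _ hc
    have h2 : ρ x = x := ρ.injective h1
    rw [h2] at hc
    exact hc hx
  have ha := hmem a (by simp)
  have hb := hmem b (by simp)
  simp only [mem_insert, mem_singleton] at ha hb
  rcases ha with ha | ha
  · left
    have hb' : ρ b = b := by
      rcases hb with hb | hb
      · exact absurd (ρ.injective (hb.trans ha.symm)) (Ne.symm hab)
      · exact hb
    apply Equiv.ext; intro x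
    simp only [Equiv.Perm.coe_one, id_eq]
    by_cases hx : x ∈ ({a,b}:Finset (Fin n))
    · simp only [mem_insert, mem_singleton] at hx
      rcases hx with rfl | rfl
      · simpa using ha
      · simpa using hb'
    · simpa using h x hx
  · right
    have hb' : ρ b = a := by
      rcases hb with hb | hb
      · exact hb
      · exact absurd (ρ.injective (ha.trans hb.symm)) hab
    apply Equiv.ext; intro x
    by_cases hx : x ∈ ({a,b}:Finset (Fin n))
    · simp only [mem_insert, mem_singleton] at hx
      rcases hx with rfl | rfl
      · simp [ha, Equiv.swap_apply_left]
      · simp [hb', Equiv.swap_apply_right]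
    · simp only [mem_insert, mem_singleton, not_or] at hx
      simp [h x (by simp [hx]), Equiv.swap_apply_of_ne_of_ne hx.1 hx.2]

lemma mem_pair_iff_swap_ne {n : ℕ} {a b : Fin n} (hab : a ≠ b) (x : Fin n) :
    x ∈ ({a,b}:Finset (Fin n)) ↔ Equiv.swap a b x ≠ x := by
  rw [Equiv.swap_apply_ne_self_iff]
  simp [hab]

lemma pD_j0 {s n : ℕ} (A : Fin n → Fin s → Fin n) (D : Finset (Fin s)) (σ : Equiv.Perm (Fin n))
    {j₀ : Fin s} (hj : j₀ ∉ D) : ∀ i, pD A D σ i j₀ = A i j₀ := by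
  intro i; simp [pD, swapVec, hj]

lemma pD_feasible {s n : ℕ} {A : Fin n → Fin s → Fin n} (hA : Feasible A)
    (D : Finset (Fin s)) (σ : Equiv.Perm (Fin n)) : Feasible (pD A D σ) := by
  intro j
  by_cases hj : j ∈ D
  · simp only [pD, swapVec, if_pos hj]
    exact (hA j).comp σ.injective
  · simp only [pD, swapVec, if_neg hj]
    exact hA j

theorem stmt_12 (s n : ℕ) (hs : 2 ≤ s) (hn : 2 ≤ n)
    (A : Fin n → Fin s → Fin n) (hA : Feasible A) (j₀ : Fin s) :
    (Nkopt A j₀ 2).ncard = 1 + Nat.choose n 2 * (2 ^ (s - 1) - 1) := by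
  classical
  set pairs : Finset (Finset (Fin n)) := Finset.powersetCard 2 Finset.univ with hpairs
  set Dsets : Finset (Finset (Fin s)) := ((Finset.univ.erase j₀).powerset).erase ∅ with hDsets
  set g : Finset (Fin n) × Finset (Fin s) → Finset (Fin s → Fin n) :=
    fun x => vecSet (pD A x.2 (swapOf x.1)) with hg
  set F : Finset (Finset (Fin s → Fin n)) := insert (vecSet A) ((pairs ×ˢ Dsets).image g)
    with hF
  have hDmem : ∀ D ∈ Dsets, j₀ ∉ D ∧ D.Nonempty := by
    intro D hD
    rw [hDsets, mem_erase, Finset.mem_powerset] at hD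
    refine ⟨fun hj => ?_, Finset.nonempty_iff_ne_empty.mpr hD.1⟩
    exact (Finset.mem_erase.mp (hD.2 hj)).1 rfl
  -- key rigidity lemma
  have hkey : ∀ (a b : Fin n), a ≠ b → ∀ D ∈ Dsets, ∀ (a' b' : Fin n), a' ≠ b' →
      ∀ D' ∈ Dsets,
      vecSet (pD A D (Equiv.swap a b)) = vecSet (pD A D' (Equiv.swap a' b')) →
      ({a, b} : Finset (Fin n)) = {a', b'} ∧ D = D' := by
    intro a b hab D hD a' b' hab' D' hD' h
    have hEq : pD A D (Equiv.swap a b) = pD A D' (Equiv.swap a' b') :=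
      vecSet_eq_imp (hA j₀) (pD_j0 A D _ (hDmem D hD).1) (pD_j0 A D' _ (hDmem D' hD').1) h
    have hpt : ∀ i j, (if j ∈ D then A (Equiv.swap a b i) j else A i j)
        = (if j ∈ D' then A (Equiv.swap a' b' i) j else A i j) := by
      intro i j
      have := congrFun (congrFun hEq i) j
      simpa only [pD, swapVec] using this
    have hDsub : D ⊆ D' := by
      intro j hj
      by_contra hj'
      have hba : A b j = A a j := by
        have := hpt a j
        rwa [if_pos hj, if_neg hj', Equiv.swap_apply_left] at this
      exact hab (hA j hba).symm
    have hDsub' : D' ⊆ D := by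
      intro j hj
      by_contra hj'
      have hba : A a' j = A b' j := by
        have := hpt a' j
        rwa [if_neg hj', if_pos hj, Equiv.swap_apply_left] at this
      exact hab' (hA j hba)
    have hDD : D = D' := Finset.Subset.antisymm hDsub hDsub'
    obtain ⟨j, hjD⟩ := (hDmem D hD).2
    have hσ : Equiv.swap a b = Equiv.swap a' b' := by
      apply Equiv.ext; intro i
      have := hpt i j
      rw [if_pos hjD, if_pos (hDD ▸ hjD)] at this
      exact hA j this
    refine ⟨?_, hDD⟩
    ext x
    simp only [mem_pair_iff_swap_ne hab, mem_pair_iff_swap_ne hab', hσ]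
  have hnotA : ∀ (a b : Fin n), a ≠ b → ∀ D ∈ Dsets,
      vecSet A ≠ vecSet (pD A D (Equiv.swap a b)) := by
    intro a b hab D hD h
    have hEq : A = pD A D (Equiv.swap a b) :=
      vecSet_eq_imp (hA j₀) (fun _ => rfl) (pD_j0 A D _ (hDmem D hD).1) h
    obtain ⟨j, hjD⟩ := (hDmem D hD).2
    have : A a j = A b j := by
      have := congrFun (congrFun hEq a) j
      simpa only [pD, swapVec, if_pos hjD, Equiv.swap_apply_left] using this
    exact hab (hA j this)
  have hset : Nkopt A j₀ 2 = (F : Set (Finset (Fin s → Fin n))) := by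
    ext x
    simp only [Nkopt, W, Set.mem_iUnion, Set.mem_setOf_eq]
    constructor
    · rintro ⟨I, hI, A', hfeas, hvec, hj₀, hW⟩
      obtain ⟨a, b, hab, rfl⟩ := Finset.card_eq_two.mp hI
      set D : Finset (Fin s) := Finset.univ.filter (fun j => ¬ ∀ i, A' i j = A i j) with hD
      have hswap : ∀ j ∈ D, ∀ i, A' i j = A (Equiv.swap a b i) j := by
        intro j hj i
        rw [hD, Finset.mem_filter] at hj
        have hj2 := hj.2
        push_neg at hj2
        obtain ⟨i₀, hi₀⟩ := hj2
        have hjj : j ≠ j₀ := by rintro rfl; exact hi₀ (hj₀ i₀)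
        obtain ⟨ρ, hρfix, hρ⟩ := hW j hjj
        rcases perm_fix_pair hab ρ hρfix with rfl | rfl
        · exact absurd (hρ i₀) (by simpa using hi₀)
        · exact hρ i
      have hj₀D : j₀ ∉ D := by
        rw [hD, Finset.mem_filter]
        rintro ⟨-, hc⟩
        exact hc hj₀
      have hA' : A' = pD A D (Equiv.swap a b) := by
        funext i j
        simp only [pD, swapVec]
        by_cases hj : j ∈ D
        · rw [if_pos hj]; exact hswap j hj i
        · rw [if_neg hj]
          by_contra hc
          exact hj (Finset.mem_filter.mpr ⟨Finset.mem_univ j, fun hall => hc (hall i)⟩)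
      refine Finset.mem_coe.mpr ?_
      by_cases hDe : D = ∅
      · have hAA : A' = A := by
          rw [hA', hDe]; funext i j; simp [pD, swapVec]
        rw [← hvec, hAA, hF]
        exact Finset.mem_insert_self _ _
      · have hDd : D ∈ Dsets := by
          rw [hDsets, Finset.mem_erase]
          refine ⟨hDe, Finset.mem_powerset.mpr fun j hj => ?_⟩
          refine Finset.mem_erase.mpr ⟨fun hjj => ?_, Finset.mem_univ j⟩
          exact hj₀D (hjj ▸ hj)
        rw [hF]
        refine Finset.mem_insert_of_mem (Finset.mem_image.mpr ⟨({a, b}, D), ?_, ?_⟩)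
        · rw [Finset.mem_product]
          exact ⟨Finset.mem_powersetCard_univ.mpr hI, hDd⟩
        · rw [hg]
          simp only
          rw [swapOf_pair hab, ← hA', hvec]
    · intro hx
      rw [Finset.mem_coe, hF, Finset.mem_insert] at hx
      rcases hx with rfl | hx
      · have hab01 : (⟨0, by omega⟩ : Fin n) ≠ ⟨1, by omega⟩ :=
          Fin.ne_of_val_ne (by norm_num)
        refine ⟨{⟨0, by omega⟩, ⟨1, by omega⟩}, Finset.card_pair hab01, A, hA, rfl,
          fun i => rfl, fun j hj => ⟨1, fun i _ => rfl, fun i => rfl⟩⟩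
      · obtain ⟨⟨P, D⟩, hmem, rfl⟩ := Finset.mem_image.mp hx
        rw [Finset.mem_product] at hmem
        have hP2 : P.card = 2 := Finset.mem_powersetCard_univ.mp hmem.1
        obtain ⟨a, b, hab, rfl⟩ := Finset.card_eq_two.mp hP2
        have hj₀D : j₀ ∉ D := (hDmem D hmem.2).1
        refine ⟨{a, b}, hP2, pD A D (swapOf {a, b}), pD_feasible hA _ _, rfl,
          pD_j0 A D _ hj₀D, fun j hj => ?_⟩
        by_cases hjD : j ∈ D
        · refine ⟨Equiv.swap a b, fun i hi => ?_, fun i => ?_⟩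
          · simp only [Finset.mem_insert, Finset.mem_singleton, not_or] at hi
            exact Equiv.swap_apply_of_ne_of_ne hi.1 hi.2
          · rw [swapOf_pair hab]
            simp [pD, swapVec, hjD]
        · exact ⟨1, fun i _ => rfl, fun i => by simp [pD, swapVec, hjD]⟩
  have h1 : vecSet A ∉ (pairs ×ˢ Dsets).image g := by
    rw [Finset.mem_image]
    rintro ⟨⟨P, D⟩, hmem, hEq⟩
    rw [Finset.mem_product] at hmem
    obtain ⟨a, b, hab, rfl⟩ :=
      Finset.card_eq_two.mp (Finset.mem_powersetCard_univ.mp hmem.1)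
    rw [hg] at hEq
    simp only at hEq
    rw [swapOf_pair hab] at hEq
    exact hnotA a b hab D hmem.2 hEq.symm
  have h2 : Set.InjOn g ↑(pairs ×ˢ Dsets) := by
    rintro ⟨P, D⟩ hm ⟨P', D'⟩ hm' hEq
    rw [Finset.mem_coe, Finset.mem_product] at hm hm'
    obtain ⟨a, b, hab, rfl⟩ :=
      Finset.card_eq_two.mp (Finset.mem_powersetCard_univ.mp hm.1)
    obtain ⟨a', b', hab', rfl⟩ :=
      Finset.card_eq_two.mp (Finset.mem_powersetCard_univ.mp hm'.1)
    rw [hg] at hEq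
    simp only at hEq
    rw [swapOf_pair hab, swapOf_pair hab'] at hEq
    obtain ⟨hPP, hDD⟩ := hkey a b hab D hm.2 a' b' hab' D' hm'.2 hEq
    exact Prod.ext hPP hDD
  have hpc : pairs.card = n.choose 2 := by
    rw [hpairs, Finset.card_powersetCard, Finset.card_univ, Fintype.card_fin]
  have hdc : Dsets.card = 2 ^ (s - 1) - 1 := by
    rw [hDsets, Finset.card_erase_of_mem (Finset.empty_mem_powerset _),
      Finset.card_powerset, Finset.card_erase_of_mem (Finset.mem_univ j₀),
      Finset.card_univ, Fintype.card_fin]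
  rw [hset, Set.ncard_coe_finset, hF,
    Finset.card_insert_of_notMem h1, Finset.card_image_of_injOn h2,
    Finset.card_product, hpc, hdc]
  omega
end

section
/- Let A be a feasible assignment with distinguished dimension j₀ ∈ Fin s, and let n ≥ 3. The 3-opt neighborhood N₃opt(A), the union of Wₐ(I) over all I ⊆ Fin n with |I| = 3 (regarded as a set of n-element vector sets), has cardinality exactly 1 + C(n,2)·(2^{s−1} − 1) + C(n,3)·(6^{s−1} − 3·2^{s−1} + 2). -/
open Finset Equiv
open scoped Classical

section Aux
variable {s n : ℕ}

/-- The assignment built from a tuple of permutations. -/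
def phiA (A : Fin n → Fin s → Fin n) (f : Fin s → Equiv.Perm (Fin n)) : Fin n → Fin s → Fin n :=
  fun i j => A (f j i) j

/-- The union of the supports of the permutations in a tuple. -/
def suppU (f : Fin s → Equiv.Perm (Fin n)) : Finset (Fin n) :=
  Finset.univ.filter (fun i => ∃ j, f j i ≠ i)

lemma mem_suppU {f : Fin s → Equiv.Perm (Fin n)} {i : Fin n} :
    i ∈ suppU f ↔ ∃ j, f j i ≠ i := by simp [suppU]

lemma count_le (j₀ : Fin s) (K : Finset (Fin n)) :
    (Finset.univ.filter (fun f : Fin s → Equiv.Perm (Fin n) =>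
        f j₀ = 1 ∧ ∀ i ∉ K, ∀ j, f j i = i)).card = Nat.factorial K.card ^ (s - 1) := by
  have hperm : (Finset.univ.filter (fun σ : Equiv.Perm (Fin n) => ∀ i, i ∉ K → σ i = i)).card
      = Nat.factorial K.card := by
    calc (Finset.univ.filter (fun σ : Equiv.Perm (Fin n) => ∀ i, i ∉ K → σ i = i)).card
        = Fintype.card {σ : Equiv.Perm (Fin n) // ∀ i, ¬ i ∈ K → σ i = i} :=
          (Fintype.card_subtype _).symm
      _ = Fintype.card (Equiv.Perm {i : Fin n // i ∈ K}) :=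
          (Fintype.card_congr (Equiv.Perm.subtypeEquivSubtypePerm (· ∈ K))).symm
      _ = Nat.factorial K.card := by rw [Fintype.card_perm, Fintype.card_coe]
  have hset : (Finset.univ.filter (fun f : Fin s → Equiv.Perm (Fin n) =>
        f j₀ = 1 ∧ ∀ i ∉ K, ∀ j, f j i = i))
      = Fintype.piFinset (fun j : Fin s => if j = j₀ then ({1} : Finset (Equiv.Perm (Fin n)))
          else Finset.univ.filter (fun σ => ∀ i, i ∉ K → σ i = i)) := by
    ext f
    simp only [Finset.mem_filter, Finset.mem_univ, true_and, Fintype.mem_piFinset]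
    constructor
    · rintro ⟨h1, h2⟩ j
      by_cases hj : j = j₀
      · subst hj; simp [h1]
      · simp only [if_neg hj, Finset.mem_filter, Finset.mem_univ, true_and]
        exact fun i hi => h2 i hi j
    · intro h
      have h0 : f j₀ = 1 := by have := h j₀; simpa using this
      refine ⟨h0, fun i hi j => ?_⟩
      by_cases hj : j = j₀
      · subst hj; simp [h0]
      · have := h j; rw [if_neg hj] at this
        simp only [Finset.mem_filter, Finset.mem_univ, true_and] at this
        exact this i hi
  rw [hset, Fintype.card_piFinset]
  have : ∀ j : Fin s, (if j = j₀ then ({1} : Finset (Equiv.Perm (Fin n)))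
      else Finset.univ.filter (fun σ => ∀ i, i ∉ K → σ i = i)).card
      = if j = j₀ then 1 else Nat.factorial K.card := by
    intro j; by_cases hj : j = j₀ <;> simp [hj, hperm]
  rw [Finset.prod_congr rfl (fun j _ => this j)]
  rw [← Finset.mul_prod_erase Finset.univ _ (Finset.mem_univ j₀), if_pos rfl, one_mul]
  rw [Finset.prod_congr rfl (fun j hj => if_neg (Finset.mem_erase.1 hj).1),
    Finset.prod_const, Finset.card_erase_of_mem (Finset.mem_univ j₀), Finset.card_univ,
    Fintype.card_fin]


/-- the exact-count function -/
def ev (s : ℕ) : ℕ → ℕ := fun m =>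
  if m = 0 then 1 else if m = 1 then 0 else if m = 2 then 2 ^ (s - 1) - 1
  else 6 ^ (s - 1) - 3 * 2 ^ (s - 1) + 2

def Ecard (j₀ : Fin s) (K : Finset (Fin n)) : ℕ :=
  (Finset.univ.filter (fun f : Fin s → Equiv.Perm (Fin n) =>
      f j₀ = 1 ∧ suppU f = K)).card


lemma suppU_subset_iff {f : Fin s → Equiv.Perm (Fin n)} {K : Finset (Fin n)} :
    suppU f ⊆ K ↔ ∀ i ∉ K, ∀ j, f j i = i := by
  constructor
  · intro h i hi j
    by_contra hne
    exact hi (h (by simp [suppU]; exact ⟨j, hne⟩))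
  · intro h i hi
    simp only [suppU, Finset.mem_filter, Finset.mem_univ, true_and] at hi
    obtain ⟨j, hj⟩ := hi
    by_contra hiK
    exact hj (h i hiK j)

lemma sum_Ecard (j₀ : Fin s) (K : Finset (Fin n)) :
    ∑ K' ∈ K.powerset, Ecard j₀ K' = Nat.factorial K.card ^ (s - 1) := by
  rw [← count_le j₀ K]
  rw [Finset.card_eq_sum_card_fiberwise
    (f := suppU) (t := K.powerset)
    (fun f hf => by
      simp only [Finset.mem_coe, Finset.mem_filter] at hf
      exact Finset.mem_powerset.2 (suppU_subset_iff.2 hf.2.2))]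
  refine Finset.sum_congr rfl fun K' hK' => ?_
  rw [Finset.mem_powerset] at hK'
  unfold Ecard
  congr 1
  ext f
  simp only [Finset.mem_filter, Finset.mem_univ, true_and, and_assoc]
  constructor
  · rintro ⟨h1, h3⟩
    exact ⟨h1, suppU_subset_iff.1 (h3 ▸ hK'), h3⟩
  · rintro ⟨h1, h2, h3⟩; exact ⟨h1, h3⟩

lemma ecard_eq (hs : 2 ≤ s) (j₀ : Fin s) :
    ∀ K : Finset (Fin n), K.card ≤ 3 → Ecard j₀ K = ev s K.card := by
  intro K
  induction K using Finset.strongInduction with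
  | _ K ih =>
    intro hK3
    have hsum := sum_Ecard j₀ K
    rw [← Finset.add_sum_erase _ _ (Finset.mem_powerset_self K)] at hsum
    have herase : ∑ K' ∈ K.powerset.erase K, Ecard j₀ K'
        = ∑ K' ∈ K.powerset.erase K, ev s K'.card := by
      refine Finset.sum_congr rfl fun K' hK' => ?_
      rw [Finset.mem_erase, Finset.mem_powerset] at hK'
      exact ih K' (Finset.ssubset_iff_subset_ne.2 ⟨hK'.2, hK'.1⟩)
        (le_trans (Finset.card_le_card hK'.2) hK3)
    rw [herase] at hsum
    have hfull : ev s K.card + ∑ K' ∈ K.powerset.erase K, ev s K'.card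
        = ∑ K' ∈ K.powerset, ev s K'.card :=
      Finset.add_sum_erase _ (fun K' => ev s K'.card) (Finset.mem_powerset_self K)
    have hps : ∑ K' ∈ K.powerset, ev s K'.card
        = ∑ m ∈ Finset.range (K.card + 1), (K.card).choose m • ev s m :=
      Finset.sum_powerset_apply_card (ev s)
    have target : ∑ m ∈ Finset.range (K.card + 1), (K.card).choose m • ev s m
        = Nat.factorial K.card ^ (s - 1) := by
      have h1 : 1 ≤ 2 ^ (s - 1) := Nat.one_le_two_pow
      have h2 : 3 * 2 ^ (s - 1) ≤ 6 ^ (s - 1) := by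
        have : (6 : ℕ) ^ (s - 1) = 3 ^ (s - 1) * 2 ^ (s - 1) := by
          rw [← Nat.mul_pow]
        rw [this]
        exact Nat.mul_le_mul_right _ (Nat.le_self_pow (by omega) 3)
      interval_cases h : K.card <;>
        simp [Finset.sum_range_succ, ev, Nat.factorial] <;>
        omega
    omega

lemma phi_inj {A : Fin n → Fin s → Fin n} (hA : Feasible A) {j₀ : Fin s}
    {f f' : Fin s → Equiv.Perm (Fin n)} (hf : f j₀ = 1) (hf' : f' j₀ = 1)
    (h : vecSet (phiA A f) = vecSet (phiA A f')) : f = f' := by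
  have key : ∀ i, phiA A f i = phiA A f' i := by
    intro i
    have hmem : phiA A f i ∈ vecSet (phiA A f') := by
      rw [← h]; exact Finset.mem_image_of_mem _ (Finset.mem_univ i)
    obtain ⟨i', -, hi'⟩ := Finset.mem_image.1 hmem
    have h0 : A i' j₀ = A i j₀ := by
      have := congrFun hi' j₀
      simpa [phiA, hf, hf'] using this
    have : i' = i := hA j₀ h0
    rw [← hi', this]
  funext j
  exact Equiv.ext fun i => hA j (congrFun (key i) j)

end Aux

theorem stmt_13 (s n : ℕ) (hs : 2 ≤ s) (hn : 3 ≤ n)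
    (A : Fin n → Fin s → Fin n) (hA : Feasible A) (j₀ : Fin s) :
    (Nkopt A j₀ 3).ncard =
      1 + Nat.choose n 2 * (2 ^ (s - 1) - 1)
        + Nat.choose n 3 * (6 ^ (s - 1) - 3 * 2 ^ (s - 1) + 2) := by
  set Tf : Finset (Fin s → Equiv.Perm (Fin n)) :=
    Finset.univ.filter (fun f => f j₀ = 1 ∧ (suppU f).card ≤ 3) with hTf
  have hTf1 : ∀ f ∈ Tf, f j₀ = 1 := fun f hf => ((Finset.mem_filter.1 hf).2).1
  -- the image description
  have himg : Nkopt A j₀ 3 = ↑(Tf.image (fun f => vecSet (phiA A f))) := by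
    ext S
    simp only [Nkopt, Set.mem_iUnion, Finset.coe_image, Set.mem_image, Finset.mem_coe]
    constructor
    · rintro ⟨I, hI, A', hA', hvec, hj0, hmov⟩
      choose ρ h1 h2 using hmov
      refine ⟨fun j => if hj : j = j₀ then 1 else ρ j hj, ?_, ?_⟩
      · rw [hTf, Finset.mem_filter]
        refine ⟨Finset.mem_univ _, by simp, ?_⟩
        have hsub : suppU (fun j => if hj : j = j₀ then 1 else ρ j hj) ⊆ I := by
          intro i hi
          simp only [suppU, Finset.mem_filter, Finset.mem_univ, true_and] at hi
          obtain ⟨j, hj⟩ := hi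
          by_cases hjj : j = j₀
          · simp [hjj] at hj
          · rw [dif_neg hjj] at hj
            by_contra hiI
            exact hj (h1 j hjj i hiI)
        calc (suppU _).card ≤ I.card := Finset.card_le_card hsub
          _ = 3 := hI
      · rw [← hvec]
        congr 1
        funext i j
        by_cases hjj : j = j₀
        · subst hjj; simp [phiA, hj0]
        · simp only [phiA, dif_neg hjj]
          exact (h2 j hjj i).symm
    · rintro ⟨f, hfTf, rfl⟩
      rw [hTf, Finset.mem_filter] at hfTf
      obtain ⟨-, hf0, hf3⟩ := hfTf
      obtain ⟨I, hsubI, -, hI3⟩ :=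
        Finset.exists_subsuperset_card_eq (Finset.subset_univ (suppU f)) hf3
          (by simpa using hn)
      refine ⟨I, hI3, phiA A f, ?_, rfl, ?_, ?_⟩
      · intro j a b hab
        exact (f j).injective (hA j hab)
      · intro i; simp [phiA, hf0]
      · intro j hj
        refine ⟨f j, fun i hiI => ?_, fun i => rfl⟩
        by_contra hne
        exact hiI (hsubI (by simp [suppU]; exact ⟨j, hne⟩))
  rw [himg, Set.ncard_coe_finset]
  rw [Finset.card_image_of_injOn (fun f hf f' hf' h =>
    phi_inj hA (hTf1 f hf) (hTf1 f' hf') h)]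
  -- now count Tf
  set t : Finset (Finset (Fin n)) :=
    Finset.univ.powerset.filter (fun K => K.card ≤ 3) with ht
  have hcard : Tf.card = ∑ K ∈ t, Ecard j₀ K := by
    rw [Finset.card_eq_sum_card_fiberwise (f := suppU) (t := t)
      (fun f hf => by
        rw [hTf, Finset.mem_coe, Finset.mem_filter] at hf
        rw [ht, Finset.mem_coe, Finset.mem_filter, Finset.mem_powerset]
        exact ⟨Finset.subset_univ _, hf.2.2⟩)]
    refine Finset.sum_congr rfl fun K hK => ?_
    rw [ht, Finset.mem_filter, Finset.mem_powerset] at hK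
    unfold Ecard
    congr 1
    ext f
    rw [hTf]
    simp only [Finset.mem_filter, Finset.mem_univ, true_and, and_assoc]
    constructor
    · rintro ⟨h1, h2, h3⟩; exact ⟨h1, h3⟩
    · rintro ⟨h1, h3⟩; exact ⟨h1, h3 ▸ hK.2, h3⟩
  rw [hcard]
  have hEc : ∀ K ∈ t, Ecard j₀ K = ev s K.card := by
    intro K hK
    rw [ht, Finset.mem_filter] at hK
    exact ecard_eq hs j₀ K hK.2
  rw [Finset.sum_congr rfl hEc]
  -- group by cardinality
  have hgroup : ∑ K ∈ t, ev s K.card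
      = ∑ m ∈ Finset.range 4, ∑ K ∈ t.filter (fun K => K.card = m), ev s K.card := by
    refine (Finset.sum_fiberwise_of_maps_to (fun K hK => ?_) _).symm
    rw [ht, Finset.mem_filter] at hK
    rw [Finset.mem_range]; omega
  rw [hgroup]
  have hfib : ∀ m ∈ Finset.range 4,
      ∑ K ∈ t.filter (fun K => K.card = m), ev s K.card = Nat.choose n m * ev s m := by
    intro m hm
    rw [Finset.mem_range] at hm
    have : t.filter (fun K => K.card = m) = Finset.powersetCard m Finset.univ := by
      ext K
      rw [Finset.mem_filter, ht, Finset.mem_filter, Finset.mem_powerset,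
        Finset.mem_powersetCard]
      constructor
      · rintro ⟨⟨h1, -⟩, h3⟩; exact ⟨h1, h3⟩
      · rintro ⟨h1, h3⟩; exact ⟨⟨h1, by omega⟩, h3⟩
    rw [this]
    rw [Finset.sum_congr rfl (fun K hK => by
      rw [(Finset.mem_powersetCard.1 hK).2])]
    rw [Finset.sum_const, Finset.card_powersetCard, Finset.card_univ, Fintype.card_fin,
      smul_eq_mul]
  rw [Finset.sum_congr rfl hfib]
  have : ∀ m, ev s m = if m = 0 then 1 else if m = 1 then 0 else if m = 2 then 2 ^ (s - 1) - 1
      else 6 ^ (s - 1) - 3 * 2 ^ (s - 1) + 2 := fun m => rfl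
  simp [Finset.sum_range_succ, this]
end

section
/- Let A be a feasible assignment, 𝒟 a nonempty admissible family of subsets of Fin s, j₀ ∈ Fin s a distinguished dimension, and 2 ≤ k ≤ n. Then the intersection of the dimensionwise neighborhood N_DV(A) with the k-opt neighborhood N_kopt(A) equals { set of vectors of p_D(A,ρ) : D ∈ 𝒟, ρ a permutation of Fin n moving at most k points }. -/
lemma feasible_pD {s n : ℕ} {A : Fin n → Fin s → Fin n} (hA : Feasible A)
    (D : Finset (Fin s)) (ρ : Equiv.Perm (Fin n)) : Feasible (pD A D ρ) := by
  intro j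
  by_cases hj : j ∈ D
  · have : (fun i => pD A D ρ i j) = (fun i => A i j) ∘ ρ := by
      funext i; simp [pD, swapVec, hj]
    rw [this]; exact (hA j).comp ρ.injective
  · have : (fun i => pD A D ρ i j) = fun i => A i j := by
      funext i; simp [pD, swapVec, hj]
    rw [this]; exact hA j

lemma vecSet_comp_perm {s n : ℕ} (B : Fin n → Fin s → Fin n) (σ : Equiv.Perm (Fin n)) :
    vecSet (fun i => B (σ i)) = vecSet B := by
  unfold vecSet
  ext v
  simp only [Finset.mem_image, Finset.mem_univ, true_and]
  constructor
  · rintro ⟨i, rfl⟩; exact ⟨σ i, rfl⟩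
  · rintro ⟨i, rfl⟩; exact ⟨σ.symm i, by simp⟩

theorem stmt_15 (s n : ℕ) (hs : 2 ≤ s) (hn : 2 ≤ n)
    (A : Fin n → Fin s → Fin n) (hA : Feasible A)
    (𝒟 : Finset (Finset (Fin s))) (h𝒟 : Admissible s 𝒟) (h𝒟ne : 𝒟.Nonempty)
    (j₀ : Fin s) (k : ℕ) (hk2 : 2 ≤ k) (hkn : k ≤ n) :
    NDV A 𝒟 ∩ Nkopt A j₀ k =
      {S : Finset (Fin s → Fin n) | ∃ D ∈ 𝒟, ∃ ρ : Equiv.Perm (Fin n),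
        (Finset.univ.filter fun i : Fin n => ρ i ≠ i).card ≤ k ∧ S = vecSet (pD A D ρ)} := by
  obtain ⟨hEm, huniv, hcompl⟩ := h𝒟
  ext S
  constructor
  · rintro ⟨⟨D, hD, ρ, rfl⟩, hkopt⟩
    simp only [Nkopt, Set.mem_iUnion] at hkopt
    obtain ⟨I, hI, A', hA', hvec, hj₀, hρj⟩ := hkopt
    refine ⟨D, hD, ρ, ?_, rfl⟩
    -- every element of vecSet A' is a value of pD A D ρ
    have hmem : ∀ i, ∃ m, pD A D ρ m = A' i := by
      intro i
      have : A' i ∈ vecSet (pD A D ρ) := by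
        rw [← hvec]; exact Finset.mem_image_of_mem _ (Finset.mem_univ i)
      simpa [vecSet, Finset.mem_image, eq_comm] using this
    have hDne : D.Nonempty := Finset.nonempty_iff_ne_empty.2 (by rintro rfl; exact hEm hD)
    have hDnu : D ≠ Finset.univ := by rintro rfl; exact huniv hD
    by_cases hj₀D : j₀ ∈ D
    · -- A' i = pD A D ρ (ρ⁻¹ i)
      have key : ∀ i, A' i = pD A D ρ (ρ.symm i) := by
        intro i
        obtain ⟨m, hm⟩ := hmem i
        have h1 : A (ρ m) j₀ = A i j₀ := by
          have := congrFun hm j₀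
          simp only [pD, swapVec, if_pos hj₀D] at this
          rw [this, hj₀ i]
        have h2 : ρ m = i := hA j₀ h1
        have : m = ρ.symm i := by rw [← h2]; simp
        rw [← hm, this]
      obtain ⟨j, hjD⟩ : ∃ j, j ∉ D := by
        by_contra h
        push_neg at h
        exact hDnu (Finset.eq_univ_of_forall h)
      have hjj₀ : j ≠ j₀ := fun h => hjD (h ▸ hj₀D)
      obtain ⟨ρj, hρjfix, hρjval⟩ := hρj j hjj₀
      have heq : ∀ i, ρ.symm i = ρj i := by
        intro i
        apply hA j
        have h1 := congrFun (key i) j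
        simp only [pD, swapVec, if_neg hjD] at h1
        show A (ρ.symm i) j = A (ρj i) j
        rw [← h1, hρjval i]
      calc (Finset.univ.filter fun i : Fin n => ρ i ≠ i).card
          ≤ I.card := by
            apply Finset.card_le_card
            intro i hi
            simp only [Finset.mem_filter] at hi
            by_contra hiI
            have h1 : ρ.symm i = i := by rw [heq i, hρjfix i hiI]
            exact hi.2 (by conv_lhs => rw [← h1, Equiv.apply_symm_apply])
        _ = k := hI
    · have key : ∀ i, A' i = pD A D ρ i := by
        intro i
        obtain ⟨m, hm⟩ := hmem i
        have h1 : A m j₀ = A i j₀ := by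
          have := congrFun hm j₀
          simp only [pD, swapVec, if_neg hj₀D] at this
          rw [this, hj₀ i]
        have h2 : m = i := hA j₀ h1
        rw [← hm, h2]
      obtain ⟨j, hjD⟩ := hDne
      have hjj₀ : j ≠ j₀ := fun h => hj₀D (h ▸ hjD)
      obtain ⟨ρj, hρjfix, hρjval⟩ := hρj j hjj₀
      have heq : ∀ i, ρ i = ρj i := by
        intro i
        apply hA j
        have h1 := congrFun (key i) j
        simp only [pD, swapVec, if_pos hjD] at h1
        show A (ρ i) j = A (ρj i) j
        rw [← h1, hρjval i]
      calc (Finset.univ.filter fun i : Fin n => ρ i ≠ i).card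
          ≤ I.card := by
            apply Finset.card_le_card
            intro i hi
            simp only [Finset.mem_filter] at hi
            by_contra hiI
            exact hi.2 (by rw [heq i, hρjfix i hiI])
        _ = k := hI
  · rintro ⟨D, hD, ρ, hcard, rfl⟩
    refine ⟨⟨D, hD, ρ, rfl⟩, ?_⟩
    obtain ⟨I, hsub, -, hIcard⟩ :=
      Finset.exists_subsuperset_card_eq
        ((Finset.univ.filter fun i : Fin n => ρ i ≠ i).subset_univ) hcard
        (by simpa using hkn)
    simp only [Nkopt, Set.mem_iUnion]
    refine ⟨I, hIcard, ?_⟩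
    have hfixI : ∀ i ∉ I, ρ i = i := by
      intro i hi
      by_contra h
      exact hi (hsub (Finset.mem_filter.2 ⟨Finset.mem_univ i, h⟩))
    by_cases hj₀D : j₀ ∈ D
    · refine ⟨fun i => pD A D ρ (ρ.symm i), ?_, vecSet_comp_perm _ _, ?_, ?_⟩
      · intro j
        exact fun a b h => ρ.symm.injective (feasible_pD hA D ρ j h)
      · intro i; simp [pD, swapVec, hj₀D]
      · intro j hj
        by_cases hjD : j ∈ D
        · exact ⟨1, by simp, fun i => by simp [pD, swapVec, hjD]⟩
        · refine ⟨ρ.symm, ?_, fun i => by simp [pD, swapVec, hjD]⟩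
          intro i hi
          conv_lhs => rw [← hfixI i hi]
          simp
    · refine ⟨pD A D ρ, feasible_pD hA D ρ, rfl, ?_, ?_⟩
      · intro i; simp [pD, swapVec, hj₀D]
      · intro j hj
        by_cases hjD : j ∈ D
        · exact ⟨ρ, hfixI, fun i => by simp [pD, swapVec, hjD]⟩
        · exact ⟨1, by simp, fun i => by simp [pD, swapVec, hjD]⟩
end

section
/- Let A be a feasible assignment, 𝒟 a nonempty admissible family of subsets of Fin s, j₀ ∈ Fin s a distinguished dimension, and 2 ≤ k ≤ n. Then |N_DV(A) ∩ N_kopt(A)| = |𝒟|·(r_k − 1) + 1, where r_k is the number of permutations of Fin n moving at most k points. -/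
/-- `movesAtMost n k` is the number of permutations of `Fin n` with at most `k`
non-fixed points. -/
def movesAtMost (n k : ℕ) : ℕ :=
  (Finset.univ.filter fun ρ : Equiv.Perm (Fin n) =>
    (Finset.univ.filter fun i : Fin n => ρ i ≠ i).card ≤ k).card

namespace StmtAux

variable {s n : ℕ}

lemma pD_apply (A : Fin n → Fin s → Fin n) (D : Finset (Fin s)) (ρ : Equiv.Perm (Fin n))
    (i : Fin n) (j : Fin s) : pD A D ρ i j = if j ∈ D then A (ρ i) j else A i j := rfl

lemma pD_one (A : Fin n → Fin s → Fin n) (D : Finset (Fin s)) : pD A D 1 = A := by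
  funext i j
  simp [pD, swapVec]

lemma vecSet_perm (B : Fin n → Fin s → Fin n) (σ : Equiv.Perm (Fin n)) :
    vecSet (fun i => B (σ i)) = vecSet B := by
  unfold vecSet
  ext v
  simp only [Finset.mem_image, Finset.mem_univ, true_and]
  constructor
  · rintro ⟨i, rfl⟩; exact ⟨σ i, rfl⟩
  · rintro ⟨i, rfl⟩; exact ⟨σ⁻¹ i, by simp⟩

lemma feasible_comp {B : Fin n → Fin s → Fin n} (hB : Feasible B) (σ : Equiv.Perm (Fin n)) :
    Feasible (fun i => B (σ i)) := by
  intro j i i' h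
  exact σ.injective (hB j h)

lemma pD_feasible (A : Fin n → Fin s → Fin n) (hA : Feasible A)
    (D : Finset (Fin s)) (ρ : Equiv.Perm (Fin n)) : Feasible (pD A D ρ) := by
  intro j i i' h
  simp only [pD, swapVec] at h
  by_cases hj : j ∈ D
  · simp only [hj, if_true] at h
    exact ρ.injective (hA j h)
  · simp only [hj, if_false] at h
    exact hA j h

lemma feasible_injective {A : Fin n → Fin s → Fin n} (hA : Feasible A) (j : Fin s) :
    Function.Injective A := fun i i' h => hA j (congrFun h j)

lemma perm_eq_of_coord {A : Fin n → Fin s → Fin n} (hA : Feasible A) (j : Fin s)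
    {α β : Equiv.Perm (Fin n)} (h : ∀ i, A (α i) j = A (β i) j) : α = β :=
  Equiv.ext fun i => hA j (h i)

lemma exists_match (j₀ : Fin s) {B C : Fin n → Fin s → Fin n}
    (hB : Feasible B) (hC : Feasible C) (h : vecSet B = vecSet C) :
    ∃ σ : Equiv.Perm (Fin n), ∀ i, B i = C (σ i) := by
  have hmem : ∀ i, ∃ i', C i' = B i := by
    intro i
    have : B i ∈ vecSet C := by
      rw [← h]
      exact Finset.mem_image_of_mem B (Finset.mem_univ i)
    simpa [vecSet, Finset.mem_image] using this
  choose g hg using hmem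
  have hginj : Function.Injective g := by
    intro i i' hii
    exact feasible_injective hB j₀ (by rw [← hg, ← hg, hii])
  exact ⟨Equiv.ofBijective g (Finite.injective_iff_bijective.mp hginj),
    fun i => (hg i).symm⟩

end StmtAux

namespace StmtAux
variable {s n : ℕ}

lemma pD_mem_Nkopt_iff (A : Fin n → Fin s → Fin n) (hA : Feasible A) (j₀ : Fin s)
    (k : ℕ) (hkn : k ≤ n) (D : Finset (Fin s)) (hD0 : D ≠ ∅) (hD1 : D ≠ Finset.univ)
    (ρ : Equiv.Perm (Fin n)) :
    vecSet (pD A D ρ) ∈ Nkopt A j₀ k ↔ ρ.support.card ≤ k := by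
  constructor
  · intro hmem
    rw [Nkopt, Set.mem_iUnion₂] at hmem
    obtain ⟨I, hI, A', hfeas, hvec, hj0, hperm⟩ := hmem
    obtain ⟨σ, hσ⟩ := exists_match j₀ hfeas (pD_feasible A hA D ρ) hvec
    by_cases hj₀D : j₀ ∈ D
    · have hσeq : ρ * σ = 1 := by
        apply perm_eq_of_coord hA j₀
        intro i
        have h1 := congrFun (hσ i) j₀
        simp only [pD_apply, hj₀D, if_true] at h1
        have h2 := hj0 i
        simp only [Equiv.Perm.mul_apply, Equiv.Perm.one_apply]
        rw [← h1, h2]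
      have hσρ : σ = ρ⁻¹ := eq_inv_of_mul_eq_one_right hσeq
      obtain ⟨j, hjD⟩ : ∃ j, j ∉ D := by
        by_contra hcon
        push_neg at hcon
        exact hD1 (Finset.eq_univ_iff_forall.mpr hcon)
      have hjne : j ≠ j₀ := fun h => hjD (h ▸ hj₀D)
      obtain ⟨ρj, hfix, hval⟩ := hperm j hjne
      have hρj : ρj = ρ⁻¹ := by
        apply perm_eq_of_coord hA j
        intro i
        have h1 := congrFun (hσ i) j
        simp only [pD_apply, hjD, if_false] at h1
        rw [← hval i, h1, hσρ]
      have hsub : ρ.support ⊆ I := by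
        intro i hi
        by_contra hiI
        have h1 := hfix i hiI
        rw [hρj] at h1
        have : ρ i = i := by
          conv_lhs => rw [← h1]
          exact Equiv.apply_symm_apply ρ i
        exact (Equiv.Perm.mem_support.mp hi) this
      exact (Finset.card_le_card hsub).trans (le_of_eq hI)
    · have hσ1 : σ = 1 := by
        apply perm_eq_of_coord hA j₀
        intro i
        have h1 := congrFun (hσ i) j₀
        simp only [pD_apply, hj₀D, if_false] at h1
        simp only [Equiv.Perm.one_apply]
        rw [← h1, hj0 i]
      obtain ⟨j, hjD⟩ := Finset.nonempty_iff_ne_empty.mpr hD0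
      have hjne : j ≠ j₀ := fun h => hj₀D (h ▸ hjD)
      obtain ⟨ρj, hfix, hval⟩ := hperm j hjne
      have hρj : ρj = ρ := by
        apply perm_eq_of_coord hA j
        intro i
        have h1 := congrFun (hσ i) j
        simp only [pD_apply, hjD, if_true] at h1
        rw [← hval i, h1, hσ1]
        simp
      have hsub : ρ.support ⊆ I := by
        intro i hi
        by_contra hiI
        exact (Equiv.Perm.mem_support.mp hi) (hρj ▸ hfix i hiI)
      exact (Finset.card_le_card hsub).trans (le_of_eq hI)
  · intro hle
    obtain ⟨I, hsub, -, hI⟩ := Finset.exists_subsuperset_card_eq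
      (Finset.subset_univ ρ.support) hle (by simpa using hkn)
    rw [Nkopt, Set.mem_iUnion₂]
    refine ⟨I, hI, ?_⟩
    by_cases hj₀D : j₀ ∈ D
    · refine ⟨fun i => pD A D ρ (ρ⁻¹ i), feasible_comp (pD_feasible A hA D ρ) ρ⁻¹,
        vecSet_perm _ ρ⁻¹, ?_, ?_⟩
      · intro i
        simp [pD_apply, hj₀D]
      · intro j hj
        by_cases hjD : j ∈ D
        · exact ⟨1, fun i _ => rfl, fun i => by simp [pD_apply, hjD]⟩
        · refine ⟨ρ⁻¹, fun i hiI => ?_, fun i => by simp [pD_apply, hjD]⟩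
          have : i ∉ ρ.support := fun h => hiI (hsub h)
          rw [← Equiv.Perm.support_inv] at this
          simpa using Equiv.Perm.notMem_support.mp this
    · refine ⟨pD A D ρ, pD_feasible A hA D ρ, rfl, ?_, ?_⟩
      · intro i
        simp [pD_apply, hj₀D]
      · intro j hj
        by_cases hjD : j ∈ D
        · refine ⟨ρ, fun i hiI => ?_, fun i => by simp [pD_apply, hjD]⟩
          have : i ∉ ρ.support := fun h => hiI (hsub h)
          exact Equiv.Perm.notMem_support.mp this
        · exact ⟨1, fun i _ => rfl, fun i => by simp [pD_apply, hjD]⟩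

end StmtAux

namespace StmtAux
variable {s n : ℕ}

lemma pD_eq_self (A : Fin n → Fin s → Fin n) (hA : Feasible A)
    {D : Finset (Fin s)} (hD0 : D ≠ ∅) (hD1 : D ≠ Finset.univ)
    {ρ : Equiv.Perm (Fin n)} (h : vecSet (pD A D ρ) = vecSet A) : ρ = 1 := by
  obtain ⟨j₁, hj₁⟩ := Finset.nonempty_iff_ne_empty.mpr hD0
  obtain ⟨j₂, hj₂⟩ : ∃ j, j ∉ D := by
    by_contra hcon
    push_neg at hcon
    exact hD1 (Finset.eq_univ_iff_forall.mpr hcon)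
  obtain ⟨σ, hσ⟩ := exists_match j₁ (pD_feasible A hA D ρ) hA h
  have hσ1 : σ = 1 := by
    apply perm_eq_of_coord hA j₂
    intro i
    have h1 := congrFun (hσ i) j₂
    simp only [pD_apply, hj₂, if_false] at h1
    simpa using h1.symm
  have hρσ : ρ = σ := by
    apply perm_eq_of_coord hA j₁
    intro i
    have h1 := congrFun (hσ i) j₁
    simpa only [pD_apply, hj₁, if_true] using h1
  rw [hρσ, hσ1]

lemma pD_inj (A : Fin n → Fin s → Fin n) (hA : Feasible A) (j₀ : Fin s)
    {D E : Finset (Fin s)} {ρ τ : Equiv.Perm (Fin n)}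
    (hD0 : D ≠ ∅) (hD1 : D ≠ Finset.univ) (hE0 : E ≠ ∅) (hE1 : E ≠ Finset.univ)
    (hDE : E ≠ Dᶜ) (hρ : ρ ≠ 1) (hτ : τ ≠ 1)
    (h : vecSet (pD A D ρ) = vecSet (pD A E τ)) : D = E ∧ ρ = τ := by
  obtain ⟨σ, hσ⟩ := exists_match j₀ (pD_feasible A hA D ρ) (pD_feasible A hA E τ) h
  have h1 : ∀ j, j ∈ D → j ∈ E → ρ = τ * σ := by
    intro j hD hE
    apply perm_eq_of_coord hA j
    intro i
    have h' := congrFun (hσ i) j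
    simpa only [pD_apply, hD, hE, if_true, Equiv.Perm.mul_apply] using h'
  have h2 : ∀ j, j ∈ D → j ∉ E → ρ = σ := by
    intro j hD hE
    apply perm_eq_of_coord hA j
    intro i
    have h' := congrFun (hσ i) j
    simpa only [pD_apply, hD, hE, if_true, if_false] using h'
  have h3 : ∀ j, j ∉ D → j ∈ E → τ * σ = 1 := by
    intro j hD hE
    apply perm_eq_of_coord hA j
    intro i
    have h' := congrFun (hσ i) j
    simp only [pD_apply, hD, hE, if_true, if_false] at h'
    simpa only [Equiv.Perm.mul_apply, Equiv.Perm.one_apply] using h'.symm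
  have h4 : ∀ j, j ∉ D → j ∉ E → σ = 1 := by
    intro j hD hE
    apply perm_eq_of_coord hA j
    intro i
    have h' := congrFun (hσ i) j
    simpa only [pD_apply, hD, hE, if_false, Equiv.Perm.one_apply] using h'.symm
  by_cases hcase : ∃ j, j ∈ D ∧ j ∈ E
  · obtain ⟨j, hjD, hjE⟩ := hcase
    have hρτσ := h1 j hjD hjE
    have hDsubE : D ⊆ E := by
      intro a ha
      by_contra haE
      have hρσ := h2 a ha haE
      have : τ * σ = 1 * σ := by rw [← hρτσ, hρσ, one_mul]
      exact hτ (mul_right_cancel this)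
    have hEsubD : E ⊆ D := by
      intro a ha
      by_contra haD
      exact hρ (hρτσ.trans (h3 a haD ha))
    have hDeqE : D = E := Finset.Subset.antisymm hDsubE hEsubD
    obtain ⟨j', hj'⟩ : ∃ j, j ∉ D := by
      by_contra hcon
      push_neg at hcon
      exact hD1 (Finset.eq_univ_iff_forall.mpr hcon)
    have hσ1 : σ = 1 := h4 j' hj' (fun hc => hj' (hDeqE ▸ hc))
    refine ⟨hDeqE, ?_⟩
    rw [hρτσ, hσ1, mul_one]
  · push_neg at hcase
    exfalso
    have hEsub : E ⊆ Dᶜ := by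
      intro a ha
      simp only [Finset.mem_compl]
      intro haD
      exact hcase a haD ha
    obtain ⟨j, hjDc, hjE⟩ := Finset.exists_of_ssubset (hEsub.ssubset_of_ne hDE)
    have hjD : j ∉ D := Finset.mem_compl.mp hjDc
    have hσ1 : σ = 1 := h4 j hjD hjE
    obtain ⟨a, haD⟩ := Finset.nonempty_iff_ne_empty.mpr hD0
    have haE : a ∉ E := hcase a haD
    exact hρ ((h2 a haD haE).trans hσ1)

end StmtAux

theorem stmt_16 (s n : ℕ) (hs : 2 ≤ s) (hn : 2 ≤ n)
    (A : Fin n → Fin s → Fin n) (hA : Feasible A)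
    (𝒟 : Finset (Finset (Fin s))) (h𝒟 : Admissible s 𝒟) (h𝒟ne : 𝒟.Nonempty)
    (j₀ : Fin s) (k : ℕ) (hk2 : 2 ≤ k) (hkn : k ≤ n) :
    (NDV A 𝒟 ∩ Nkopt A j₀ k).ncard = 𝒟.card * (movesAtMost n k - 1) + 1 := by
  classical
  obtain ⟨hAe, huniv, hcompl⟩ := h𝒟
  have hDprops : ∀ D ∈ 𝒟, D ≠ ∅ ∧ D ≠ Finset.univ := fun D hD =>
    ⟨fun h => hAe (h ▸ hD), fun h => huniv (h ▸ hD)⟩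
  set f : Finset (Fin s) × Equiv.Perm (Fin n) → Finset (Fin s → Fin n) :=
    fun p => vecSet (pD A p.1 p.2) with hf
  set T : Finset (Finset (Fin s) × Equiv.Perm (Fin n)) :=
    𝒟 ×ˢ (Finset.univ.filter fun ρ : Equiv.Perm (Fin n) =>
      ρ.support.card ≤ k ∧ ρ ≠ 1) with hT
  have hmemT : ∀ p, p ∈ T ↔ p.1 ∈ 𝒟 ∧ p.2.support.card ≤ k ∧ p.2 ≠ 1 := by
    intro p
    simp [hT, Finset.mem_product, Finset.mem_filter]
  -- the set equality
  have hset : NDV A 𝒟 ∩ Nkopt A j₀ k = ↑(insert (vecSet A) (T.image f)) := by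
    ext S
    simp only [Set.mem_inter_iff, Finset.coe_insert, Set.mem_insert_iff,
      Finset.mem_coe, Finset.mem_image]
    constructor
    · rintro ⟨⟨D, hD, ρ, rfl⟩, hk⟩
      obtain ⟨hD0, hD1⟩ := hDprops D hD
      have hle : ρ.support.card ≤ k :=
        (StmtAux.pD_mem_Nkopt_iff A hA j₀ k hkn D hD0 hD1 ρ).mp hk
      by_cases hρ1 : ρ = 1
      · left
        rw [hρ1, StmtAux.pD_one]
      · right
        exact ⟨(D, ρ), (hmemT (D, ρ)).mpr ⟨hD, hle, hρ1⟩, rfl⟩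
    · rintro (rfl | ⟨⟨D, ρ⟩, hp, rfl⟩)
      · obtain ⟨D, hD⟩ := h𝒟ne
        obtain ⟨hD0, hD1⟩ := hDprops D hD
        constructor
        · exact ⟨D, hD, 1, by rw [StmtAux.pD_one]⟩
        · have := (StmtAux.pD_mem_Nkopt_iff A hA j₀ k hkn D hD0 hD1 1).mpr
            (by simp)
          rwa [StmtAux.pD_one] at this
      · obtain ⟨hD, hle, hρ1⟩ := (hmemT (D, ρ)).mp hp
        obtain ⟨hD0, hD1⟩ := hDprops D hD
        exact ⟨⟨D, hD, ρ, rfl⟩,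
          (StmtAux.pD_mem_Nkopt_iff A hA j₀ k hkn D hD0 hD1 ρ).mpr hle⟩
  rw [hset, Set.ncard_coe_finset]
  have hnotmem : vecSet A ∉ T.image f := by
    rw [Finset.mem_image]
    rintro ⟨⟨D, ρ⟩, hp, heq⟩
    obtain ⟨hD, hle, hρ1⟩ := (hmemT (D, ρ)).mp hp
    obtain ⟨hD0, hD1⟩ := hDprops D hD
    exact hρ1 (StmtAux.pD_eq_self A hA hD0 hD1 heq)
  rw [Finset.card_insert_of_notMem hnotmem]
  have hinj : Set.InjOn f T := by
    rintro ⟨D, ρ⟩ hp ⟨E, τ⟩ hq heq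
    obtain ⟨hD, hleρ, hρ1⟩ := (hmemT (D, ρ)).mp hp
    obtain ⟨hE, hleτ, hτ1⟩ := (hmemT (E, τ)).mp hq
    obtain ⟨hD0, hD1⟩ := hDprops D hD
    obtain ⟨hE0, hE1⟩ := hDprops E hE
    have hEDc : E ≠ Dᶜ := fun h => hcompl D hD (h ▸ hE)
    obtain ⟨h1, h2⟩ := StmtAux.pD_inj A hA j₀ hD0 hD1 hE0 hE1 hEDc hρ1 hτ1 heq
    simpa [Prod.ext_iff] using ⟨h1, h2⟩
  rw [Finset.card_image_of_injOn hinj, hT, Finset.card_product]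
  -- count the permutations
  have hfilter : (Finset.univ.filter fun ρ : Equiv.Perm (Fin n) =>
      ρ.support.card ≤ k ∧ ρ ≠ 1)
      = (Finset.univ.filter fun ρ : Equiv.Perm (Fin n) => ρ.support.card ≤ k).erase 1 := by
    ext ρ
    simp only [Finset.mem_filter, Finset.mem_erase, Finset.mem_univ, true_and]
    tauto
  have hone : (1 : Equiv.Perm (Fin n)) ∈
      (Finset.univ.filter fun ρ : Equiv.Perm (Fin n) => ρ.support.card ≤ k) := by
    simp
  have hmoves : movesAtMost n k
      = (Finset.univ.filter fun ρ : Equiv.Perm (Fin n) => ρ.support.card ≤ k).card := by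
    unfold movesAtMost
    congr 1
  rw [hfilter, Finset.card_erase_of_mem hone, hmoves]
end

section
/- Let A be a feasible assignment, 𝒟 a nonempty admissible family of subsets of Fin s, j₀ ∈ Fin s a distinguished dimension, and n ≥ 2. Then the combined neighborhood N_DV(A) ∪ N₂opt(A) has cardinality exactly 1 + |𝒟|·(n! − 1) + C(n,2)·(2^{s−1} − 1) − |𝒟|·C(n,2). -/
namespace S17
variable {s n : ℕ}

lemma swapVec_self (u : Fin s → Fin n) (D : Finset (Fin s)) : swapVec u u D = u := by
  funext j; simp [swapVec]

lemma swapVec_empty (u v : Fin s → Fin n) : swapVec u v ∅ = u := by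
  funext j; simp [swapVec]

lemma swapVec_compl (u v : Fin s → Fin n) (D : Finset (Fin s)) :
    swapVec u v Dᶜ = swapVec v u D := by
  funext j; by_cases h : j ∈ D <;> simp [swapVec, h]

lemma pD_one (A : Fin n → Fin s → Fin n) (D : Finset (Fin s)) : pD A D 1 = A := by
  funext i; simp [pD, swapVec_self]

def Bab (A : Fin n → Fin s → Fin n) (a b : Fin n) (E : Finset (Fin s)) :
    Fin n → Fin s → Fin n :=
  fun i => if i = a then swapVec (A a) (A b) E else if i = b then swapVec (A b) (A a) E else A i

lemma pD_swap (A : Fin n → Fin s → Fin n) (a b : Fin n) (E : Finset (Fin s)) :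
    pD A E (Equiv.swap a b) = Bab A a b E := by
  funext i
  by_cases hia : i = a
  · subst hia; simp [pD, Bab, Equiv.swap_apply_left]
  by_cases hib : i = b
  · subst hib; simp [pD, Bab, Equiv.swap_apply_right, hia]
  · simp [pD, Bab, hia, hib, Equiv.swap_apply_of_ne_of_ne hia hib, swapVec_self]

lemma Bab_empty (A : Fin n → Fin s → Fin n) (a b : Fin n) : Bab A a b ∅ = A := by
  funext i
  by_cases hia : i = a
  · subst hia; simp [Bab, swapVec_empty]
  by_cases hib : i = b
  · subst hib; simp [Bab, swapVec_empty, hia]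
  · simp [Bab, hia, hib]

lemma Bab_comm (A : Fin n → Fin s → Fin n) {a b : Fin n} (hab : a ≠ b) (E : Finset (Fin s)) :
    Bab A a b E = Bab A b a E := by
  funext i
  by_cases hia : i = a
  · subst hia; simp [Bab, hab]
  by_cases hib : i = b
  · subst hib; simp [Bab, hab.symm, hia]
  · simp [Bab, hia, hib]

lemma Bab_compl (A : Fin n → Fin s → Fin n) {a b : Fin n} (hab : a ≠ b) (E : Finset (Fin s)) :
    Bab A a b Eᶜ = (Bab A a b E) ∘ (Equiv.swap a b) := by
  funext i
  by_cases hia : i = a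
  · subst hia
    simp [Bab, Function.comp, Equiv.swap_apply_left, hab.symm, swapVec_compl]
  by_cases hib : i = b
  · subst hib
    simp [Bab, Function.comp, Equiv.swap_apply_right, hia, swapVec_compl]
  · simp [Bab, Function.comp, hia, hib, Equiv.swap_apply_of_ne_of_ne hia hib]

lemma mem_vecSet {A : Fin n → Fin s → Fin n} {w : Fin s → Fin n} :
    w ∈ vecSet A ↔ ∃ i, A i = w := by simp [vecSet]

lemma vecSet_comp (A : Fin n → Fin s → Fin n) (σ : Equiv.Perm (Fin n)) :
    vecSet (A ∘ σ) = vecSet A := by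
  ext w
  simp only [mem_vecSet, Function.comp]
  constructor
  · rintro ⟨i, h⟩; exact ⟨σ i, h⟩
  · rintro ⟨i, h⟩; exact ⟨σ.symm i, by simpa using h⟩

lemma feasible_pD {A : Fin n → Fin s → Fin n} (hA : Feasible A) (D : Finset (Fin s))
    (ρ : Equiv.Perm (Fin n)) : Feasible (pD A D ρ) := by
  intro j x y h
  simp only [pD, swapVec] at h
  by_cases hj : j ∈ D <;> simp only [hj, if_true, if_false] at h
  · exact ρ.injective (hA j h)
  · exact hA j h

lemma feasible_Bab {A : Fin n → Fin s → Fin n} (hA : Feasible A) (a b : Fin n)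
    (E : Finset (Fin s)) : Feasible (Bab A a b E) := by
  rw [← pD_swap]; exact feasible_pD hA E _

lemma A_ne {A : Fin n → Fin s → Fin n} (hA : Feasible A) {a b : Fin n} (hab : a ≠ b)
    (j : Fin s) : A a j ≠ A b j := fun h => hab (hA j h)

lemma Bab_j0 {A : Fin n → Fin s → Fin n} {a b : Fin n} {E : Finset (Fin s)} {j₀ : Fin s}
    (hj₀ : j₀ ∉ E) (i : Fin n) : Bab A a b E i j₀ = A i j₀ := by
  by_cases hia : i = a
  · subst hia; simp [Bab, swapVec, hj₀]
  by_cases hib : i = b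
  · subst hib; simp [Bab, swapVec, hj₀, hia]
  · simp [Bab, hia, hib]

lemma vecSet_rigid {A A₁ A₂ : Fin n → Fin s → Fin n} (hA : Feasible A) {j₀ : Fin s}
    (h₁ : ∀ i, A₁ i j₀ = A i j₀) (h₂ : ∀ i, A₂ i j₀ = A i j₀)
    (h : vecSet A₁ = vecSet A₂) : A₁ = A₂ := by
  funext i
  have hmem : A₁ i ∈ vecSet A₂ := by rw [← h]; exact mem_vecSet.2 ⟨i, rfl⟩
  obtain ⟨k, hk⟩ := mem_vecSet.1 hmem
  have : A k j₀ = A i j₀ := by rw [← h₂ k, hk, h₁]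
  have := hA j₀ this
  subst this; exact hk.symm

lemma pD_inj {A : Fin n → Fin s → Fin n} (hA : Feasible A) {D : Finset (Fin s)}
    (hD : D ≠ Finset.univ) (ρ : Equiv.Perm (Fin n)) : Function.Injective (pD A D ρ) := by
  obtain ⟨j, hj⟩ : ∃ j, j ∉ D := by
    by_contra hc; push_neg at hc; exact hD (Finset.eq_univ_iff_forall.2 hc)
  intro x y h
  have := congrFun h j
  simp only [pD, swapVec, hj, if_false] at this
  exact hA j this

lemma pD_not_mem {A : Fin n → Fin s → Fin n} (hA : Feasible A) {D : Finset (Fin s)}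
    (hDne : D.Nonempty) (hD : D ≠ Finset.univ) {ρ : Equiv.Perm (Fin n)} {i : Fin n}
    (hi : ρ i ≠ i) : pD A D ρ i ∉ vecSet A := by
  obtain ⟨j1, hj1⟩ := hDne
  obtain ⟨j2, hj2⟩ : ∃ j, j ∉ D := by
    by_contra hc; push_neg at hc; exact hD (Finset.eq_univ_iff_forall.2 hc)
  rw [mem_vecSet]
  rintro ⟨c, hc⟩
  have e1 : A c j1 = A (ρ i) j1 := by rw [hc]; simp [pD, swapVec, hj1]
  have e2 : A c j2 = A i j2 := by rw [hc]; simp [pD, swapVec, hj2]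
  exact hi ((hA j1 e1) ▸ (hA j2 e2) ▸ rfl)

lemma Bab_not_mem {A : Fin n → Fin s → Fin n} (hA : Feasible A) {a b : Fin n} (hab : a ≠ b)
    {E : Finset (Fin s)} (hE : E.Nonempty) {j₀ : Fin s} (hj₀ : j₀ ∉ E) :
    Bab A a b E a ∉ vecSet A := by
  obtain ⟨j1, hj1⟩ := hE
  rw [mem_vecSet]
  rintro ⟨c, hc⟩
  have e1 : A c j1 = A b j1 := by rw [hc]; simp [Bab, swapVec, hj1]
  have e2 : A c j₀ = A a j₀ := by rw [hc]; simp [Bab, swapVec, hj₀]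
  exact hab ((hA j₀ e2) ▸ (hA j1 e1) ▸ rfl)

end S17

namespace S17
variable {s n : ℕ}

/-- Main injectivity lemma for dimensionwise neighbors. -/
lemma pD_vecSet_eq {A : Fin n → Fin s → Fin n} (hA : Feasible A)
    {D D' : Finset (Fin s)} (hD0 : D.Nonempty) (hDu : D ≠ Finset.univ)
    (hD0' : D'.Nonempty) (hDu' : D' ≠ Finset.univ)
    {ρ ρ' : Equiv.Perm (Fin n)} (hρ : ρ ≠ 1) (hρ' : ρ' ≠ 1)
    (h : vecSet (pD A D ρ) = vecSet (pD A D' ρ')) :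
    (D = D' ∧ ρ = ρ') ∨ (D = D'ᶜ ∧ ρ = ρ'⁻¹) := by
  have hmem : ∀ k, ∃ i, pD A D ρ i = pD A D' ρ' k := by
    intro k
    have : pD A D' ρ' k ∈ vecSet (pD A D ρ) := by
      rw [h]; exact mem_vecSet.2 ⟨k, rfl⟩
    exact mem_vecSet.1 this
  choose π hπ using hmem
  have key : ∀ k (j : Fin s),
      (if j ∈ D then A (ρ (π k)) j else A (π k) j) =
      (if j ∈ D' then A (ρ' k) j else A k j) := by
    intro k j
    have := congrFun (hπ k) j
    simpa [pD, swapVec] using this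
  have c11 : ∀ j ∈ D, j ∈ D' → ∀ k, ρ (π k) = ρ' k := by
    intro j hj hj' k
    have := key k j; rw [if_pos hj, if_pos hj'] at this; exact hA j this
  have c10 : ∀ j ∈ D, j ∉ D' → ∀ k, ρ (π k) = k := by
    intro j hj hj' k
    have := key k j; rw [if_pos hj, if_neg hj'] at this; exact hA j this
  have c01 : ∀ j, j ∉ D → j ∈ D' → ∀ k, π k = ρ' k := by
    intro j hj hj' k
    have := key k j; rw [if_neg hj, if_pos hj'] at this; exact hA j this
  have c00 : ∀ j, j ∉ D → j ∉ D' → ∀ k, π k = k := by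
    intro j hj hj' k
    have := key k j; rw [if_neg hj, if_neg hj'] at this; exact hA j this
  by_cases hsub : D ⊆ D'
  · by_cases hsub' : D' ⊆ D
    · -- D = D'
      have hDD : D = D' := Finset.Subset.antisymm hsub hsub'
      left
      refine ⟨hDD, ?_⟩
      obtain ⟨j1, hj1⟩ := hD0
      obtain ⟨j2, hj2⟩ : ∃ j, j ∉ D := by
        by_contra hc; push_neg at hc; exact hDu (Finset.eq_univ_iff_forall.2 hc)
      have hπ1 : ∀ k, π k = k := c00 j2 hj2 (by rw [← hDD]; exact hj2)
      have := c11 j1 hj1 (hDD ▸ hj1)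
      refine Equiv.ext fun k => ?_
      have := this k; rwa [hπ1 k] at this
    · -- D ⊊ D'
      exfalso
      obtain ⟨j2, hj2, hj2'⟩ := Finset.not_subset.1 hsub'
      obtain ⟨j1, hj1⟩ := hD0
      have h1 : ∀ k, ρ (π k) = ρ' k := c11 j1 hj1 (hsub hj1)
      have h2 : ∀ k, π k = ρ' k := c01 j2 hj2' hj2
      have : ∀ m, ρ m = m := by
        intro m
        have := h1 (ρ'.symm m)
        rw [h2 (ρ'.symm m)] at this
        simpa using this
      exact hρ (Equiv.ext this)
  · by_cases hsub' : D' ⊆ D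
    · -- D' ⊊ D
      exfalso
      obtain ⟨j1, hj1⟩ := hD0'
      obtain ⟨j2, hj2, hj2'⟩ := Finset.not_subset.1 hsub
      have h1 : ∀ k, ρ (π k) = ρ' k := c11 j1 (hsub' hj1) hj1
      have h3 : ∀ k, ρ (π k) = k := c10 j2 hj2 hj2'
      have : ∀ k, ρ' k = k := fun k => by rw [← h1 k, h3 k]
      exact hρ' (Equiv.ext this)
    · -- neither
      obtain ⟨j1, hj1, hj1'⟩ := Finset.not_subset.1 hsub
      obtain ⟨j2, hj2, hj2'⟩ := Finset.not_subset.1 hsub'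
      have h3 : ∀ k, ρ (π k) = k := c10 j1 hj1 hj1'
      have h2 : ∀ k, π k = ρ' k := c01 j2 hj2' hj2
      by_cases hint : (D ∩ D').Nonempty
      · exfalso
        obtain ⟨j, hj⟩ := hint
        have h1 := c11 j (Finset.mem_inter.1 hj).1 (Finset.mem_inter.1 hj).2
        have : ∀ k, ρ' k = k := fun k => by rw [← h1 k, h3 k]
        exact hρ' (Equiv.ext this)
      · by_cases huniv : ∀ j, j ∈ D ∨ j ∈ D'
        · right
          have hcomp : D = D'ᶜ := by
            ext j
            simp only [Finset.mem_compl]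
            constructor
            · intro hjD hjD'
              exact hint ⟨j, Finset.mem_inter.2 ⟨hjD, hjD'⟩⟩
            · intro hjD'
              rcases huniv j with h | h
              · exact h
              · exact absurd h hjD'
          refine ⟨hcomp, ?_⟩
          refine Equiv.ext fun m => ?_
          have := h3 (ρ'.symm m)
          rw [h2 (ρ'.symm m)] at this
          simp only [Equiv.apply_symm_apply] at this
          simpa [Equiv.Perm.inv_def] using this
        · exfalso
          push_neg at huniv
          obtain ⟨j, hjD, hjD'⟩ := huniv
          have h4 : ∀ k, π k = k := c00 j hjD hjD'
          have : ∀ k, ρ k = k := fun k => by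
            have := h3 k; rwa [h4 k] at this
          exact hρ (Equiv.ext this)

lemma perm_eq_one_or_swap (ρ : Equiv.Perm (Fin n)) (a b : Fin n)
    (h : ∀ i, i ≠ a → i ≠ b → ρ i = i) : ρ = 1 ∨ ρ = Equiv.swap a b := by
  by_cases hρa : ρ a = a
  · left
    have hρb : ρ b = b := by
      by_cases hbb : ρ b = b
      · exact hbb
      · exfalso
        have h1 : ρ b ≠ a := by
          intro e
          have hba : b = a := ρ.injective (e.trans hρa.symm)
          exact hbb (by rw [hba, hρa])
        exact hbb (ρ.injective (h (ρ b) h1 hbb))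
    refine Equiv.ext fun i => ?_
    simp only [Equiv.Perm.one_apply]
    by_cases hia : i = a
    · rw [hia]; exact hρa
    by_cases hib : i = b
    · rw [hib]; exact hρb
    · exact h i hia hib
  · right
    have hab : ρ a = b := by
      by_contra hb
      exact hρa (ρ.injective (h (ρ a) hρa hb))
    have hne : a ≠ b := fun e => hρa (by rw [hab, e])
    have hba : ρ b = a := by
      by_cases hbb : ρ b = b
      · exact absurd (ρ.injective (hab.trans hbb.symm)) hne
      · by_contra hba
        exact hbb (ρ.injective (h (ρ b) hba hbb))
    refine Equiv.ext fun i => ?_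
    by_cases hia : i = a
    · rw [hia, Equiv.swap_apply_left]; exact hab
    by_cases hib : i = b
    · rw [hib, Equiv.swap_apply_right]; exact hba
    · rw [Equiv.swap_apply_of_ne_of_ne hia hib]; exact h i hia hib

end S17

namespace S17
variable {s n : ℕ}

/-- Characterization: members of `W A j₀ I` for `|I| = 2` are `vecSet (Bab A a b E)`. -/
lemma W_char {A : Fin n → Fin s → Fin n} (hA : Feasible A) {j₀ : Fin s}
    {I : Finset (Fin n)} (hI : I.card = 2) {S : Finset (Fin s → Fin n)}
    (hS : S ∈ W A j₀ I) :
    ∃ a b : Fin n, ∃ E : Finset (Fin s), a ≠ b ∧ j₀ ∉ E ∧ S = vecSet (Bab A a b E) := by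
  obtain ⟨a, b, hab, rfl⟩ := Finset.card_eq_two.1 hI
  obtain ⟨A', hfeas, hvs, hj0, hperm⟩ := hS
  set E : Finset (Fin s) := Finset.univ.filter (fun j => A' a j = A b j) with hE
  have hj0E : j₀ ∉ E := by
    simp only [hE, Finset.mem_filter, Finset.mem_univ, true_and]
    rw [hj0 a]
    exact A_ne hA hab j₀
  refine ⟨a, b, E, hab, hj0E, ?_⟩
  rw [← hvs]
  congr 1
  funext i j
  by_cases hj : j = j₀
  · subst hj
    rw [hj0 i, Bab_j0 hj0E]
  · obtain ⟨ρ, hfix, hval⟩ := hperm j hj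
    have hρ : ρ = 1 ∨ ρ = Equiv.swap a b := by
      apply perm_eq_one_or_swap
      intro i hia hib
      exact hfix i (by simp [hia, hib])
    rcases hρ with rfl | rfl
    · -- no swap in dimension j
      have hjE : j ∉ E := by
        simp only [hE, Finset.mem_filter, Finset.mem_univ, true_and]
        rw [hval a]
        simpa using A_ne hA hab j
      rw [hval i]
      by_cases hia : i = a
      · subst hia; simp [Bab, swapVec, hjE]
      by_cases hib : i = b
      · subst hib; simp [Bab, swapVec, hjE, hia]
      · simp [Bab, hia, hib]
    · -- swap in dimension j
      have hjE : j ∈ E := by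
        simp only [hE, Finset.mem_filter, Finset.mem_univ, true_and]
        rw [hval a, Equiv.swap_apply_left]
      rw [hval i]
      by_cases hia : i = a
      · subst hia; simp [Bab, swapVec, hjE, Equiv.swap_apply_left]
      by_cases hib : i = b
      · subst hib; simp [Bab, swapVec, hjE, hia, Equiv.swap_apply_right]
      · simp [Bab, hia, hib, Equiv.swap_apply_of_ne_of_ne hia hib]

/-- Membership: `vecSet (Bab A a b E)` is in `W A j₀ {a, b}`. -/
lemma Bab_mem_W {A : Fin n → Fin s → Fin n} (hA : Feasible A) {j₀ : Fin s}
    {a b : Fin n} (hab : a ≠ b) {E : Finset (Fin s)} (hj₀ : j₀ ∉ E) :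
    vecSet (Bab A a b E) ∈ W A j₀ ({a, b} : Finset (Fin n)) := by
  refine ⟨Bab A a b E, feasible_Bab hA a b E, rfl, fun i => Bab_j0 hj₀ i, ?_⟩
  intro j hj
  refine ⟨if j ∈ E then Equiv.swap a b else 1, ?_, ?_⟩
  · intro i hi
    simp only [Finset.mem_insert, Finset.mem_singleton] at hi
    push_neg at hi
    split
    · exact Equiv.swap_apply_of_ne_of_ne hi.1 hi.2
    · rfl
  · intro i
    by_cases hjE : j ∈ E
    · simp only [hjE, if_true]
      by_cases hia : i = a
      · subst hia; simp [Bab, swapVec, hjE, Equiv.swap_apply_left]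
      by_cases hib : i = b
      · subst hib; simp [Bab, swapVec, hjE, hia, Equiv.swap_apply_right]
      · simp [Bab, hia, hib, Equiv.swap_apply_of_ne_of_ne hia hib]
    · simp only [hjE, if_false]
      by_cases hia : i = a
      · subst hia; simp [Bab, swapVec, hjE]
      by_cases hib : i = b
      · subst hib; simp [Bab, swapVec, hjE, hia]
      · simp [Bab, hia, hib]

lemma swapVec_inj {A : Fin n → Fin s → Fin n} (hA : Feasible A) {a b : Fin n} (hab : a ≠ b)
    {E E' : Finset (Fin s)} (h : swapVec (A a) (A b) E = swapVec (A a) (A b) E') : E = E' := by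
  ext j
  have hj := congrFun h j
  simp only [swapVec] at hj
  constructor
  · intro hjE
    by_contra hjE'
    rw [if_pos hjE, if_neg hjE'] at hj
    exact A_ne hA hab j hj.symm
  · intro hjE
    by_contra hjE'
    rw [if_neg hjE', if_pos hjE] at hj
    exact A_ne hA hab j hj

/-- Injectivity of the 2-opt parametrization. -/
lemma Bab_vecSet_inj {A : Fin n → Fin s → Fin n} (hA : Feasible A) {j₀ : Fin s}
    {a b a' b' : Fin n} (hab : a ≠ b) (hab' : a' ≠ b')
    {E E' : Finset (Fin s)} (hE : E.Nonempty) (hE' : E'.Nonempty)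
    (hj₀ : j₀ ∉ E) (hj₀' : j₀ ∉ E')
    (h : vecSet (Bab A a b E) = vecSet (Bab A a' b' E')) :
    ((a = a' ∧ b = b') ∨ (a = b' ∧ b = a')) ∧ E = E' := by
  have hfun : Bab A a b E = Bab A a' b' E' :=
    vecSet_rigid hA (fun i => Bab_j0 hj₀ i) (fun i => Bab_j0 hj₀' i) h
  obtain ⟨j1, hj1⟩ := hE
  have ha' : a = a' ∨ a = b' := by
    by_contra hc; push_neg at hc
    have h1 := congrFun hfun a
    have h2 : Bab A a' b' E' a = A a := by simp [Bab, hc.1, hc.2]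
    have h3 : Bab A a b E a = swapVec (A a) (A b) E := by simp [Bab]
    rw [h2, h3] at h1
    have h4 := congrFun h1 j1
    simp only [swapVec, hj1, if_true] at h4
    exact A_ne hA hab.symm j1 h4
  have hb' : b = a' ∨ b = b' := by
    by_contra hc; push_neg at hc
    have h1 := congrFun hfun b
    have h2 : Bab A a' b' E' b = A b := by simp [Bab, hc.1, hc.2]
    have h3 : Bab A a b E b = swapVec (A b) (A a) E := by simp [Bab, hab.symm]
    rw [h2, h3] at h1
    have h4 := congrFun h1 j1
    simp only [swapVec, hj1, if_true] at h4
    exact A_ne hA hab j1 h4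
  have hEeq : ∀ E'' : Finset (Fin s), Bab A a b E = Bab A a b E'' → E = E'' := by
    intro E'' he
    have h1 := congrFun he a
    have h3 : Bab A a b E a = swapVec (A a) (A b) E := by simp [Bab]
    have h4 : Bab A a b E'' a = swapVec (A a) (A b) E'' := by simp [Bab]
    rw [h3, h4] at h1
    exact swapVec_inj hA hab h1
  rcases ha' with h5 | h5
  · have h6 : b = b' := by
      rcases hb' with h6 | h6
      · exact absurd (h5.trans h6.symm) hab
      · exact h6
    subst h5; subst h6
    exact ⟨Or.inl ⟨rfl, rfl⟩, hEeq E' hfun⟩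
  · have h6 : b = a' := by
      rcases hb' with h6 | h6
      · exact h6
      · exact absurd (h5.trans h6.symm) hab
    subst h5; subst h6
    rw [Bab_comm A hab'] at hfun
    exact ⟨Or.inr ⟨rfl, rfl⟩, hEeq _ hfun⟩

end S17

namespace S17

lemma card_lt_pairs (n : ℕ) :
    (Finset.univ.filter fun p : Fin n × Fin n => p.1 < p.2).card = n.choose 2 := by
  have hswap : (Finset.univ.filter fun p : Fin n × Fin n => p.1 < p.2).card =
      (Finset.univ.filter fun p : Fin n × Fin n => p.2 < p.1).card := by
    apply Finset.card_nbij' (fun p => p.swap) (fun p => p.swap)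
    · intro p hp; simp only [Finset.mem_filter, Finset.mem_univ, true_and] at *; simpa using hp
    · intro p hp; simp only [Finset.mem_filter, Finset.mem_univ, true_and] at *; simpa using hp
    · intro p _; simp
    · intro p _; simp
  have hdisj : Disjoint (Finset.univ.filter fun p : Fin n × Fin n => p.1 < p.2)
      (Finset.univ.filter fun p : Fin n × Fin n => p.2 < p.1) := by
    rw [Finset.disjoint_filter]
    intro p _ h1 h2
    exact absurd (h1.trans h2) (lt_irrefl _)
  have hunion : (Finset.univ.filter fun p : Fin n × Fin n => p.1 < p.2) ∪
      (Finset.univ.filter fun p : Fin n × Fin n => p.2 < p.1) =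
      (Finset.univ : Finset (Fin n × Fin n)).filter fun p => p.1 ≠ p.2 := by
    rw [← Finset.filter_or]
    apply Finset.filter_congr
    intro p _
    constructor
    · rintro (h | h)
      · exact ne_of_lt h
      · exact (ne_of_lt h).symm
    · exact fun h => lt_or_gt_of_ne h
  have hcard2 : ((Finset.univ : Finset (Fin n × Fin n)).filter fun p => p.1 ≠ p.2).card =
      n * n - n := by
    have : ((Finset.univ : Finset (Fin n × Fin n)).filter fun p => p.1 ≠ p.2) =
        (Finset.univ : Finset (Fin n)).offDiag := by
      ext p; simp [Finset.mem_offDiag]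
    rw [this, Finset.offDiag_card]
    simp
  have := Finset.card_union_of_disjoint hdisj
  rw [hunion, hcard2, ← hswap] at this
  have hnn : n * n - n = n * (n - 1) := by
    cases n with
    | zero => simp
    | succ m =>
      have : (m + 1) * (m + 1) = (m + 1) * m + (m + 1) := by ring
      rw [this]
      have : (m + 1) * m + (m + 1) - (m + 1) = (m + 1) * m := by omega
      rw [this]
      simp [Nat.succ_sub_one]
  rw [Nat.choose_two_right]
  omega

end S17

namespace S17
variable {s n : ℕ}

def Pset (n : ℕ) : Finset (Fin n × Fin n) := Finset.univ.filter fun p => p.1 < p.2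

def baseSet (s : ℕ) (j₀ : Fin s) : Finset (Finset (Fin s)) :=
  ((Finset.univ.erase j₀).powerset.erase ∅)

def ESet (𝒟 : Finset (Finset (Fin s))) (j₀ : Fin s) : Finset (Finset (Fin s)) :=
  (baseSet s j₀).filter fun E => E ∉ 𝒟 ∧ Eᶜ ∉ 𝒟

def F1set (A : Fin n → Fin s → Fin n) (𝒟 : Finset (Finset (Fin s))) :
    Finset (Finset (Fin s → Fin n)) :=
  (𝒟 ×ˢ (Finset.univ.erase (1 : Equiv.Perm (Fin n)))).image fun q => vecSet (pD A q.1 q.2)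

def F2set (A : Fin n → Fin s → Fin n) (𝒟 : Finset (Finset (Fin s))) (j₀ : Fin s) :
    Finset (Finset (Fin s → Fin n)) :=
  (Pset n ×ˢ ESet 𝒟 j₀).image fun q => vecSet (Bab A q.1.1 q.1.2 q.2)

lemma mem_baseSet {j₀ : Fin s} {E : Finset (Fin s)} :
    E ∈ baseSet s j₀ ↔ E.Nonempty ∧ j₀ ∉ E := by
  simp only [baseSet, Finset.mem_erase, Finset.mem_powerset, Finset.subset_erase,
    Finset.subset_univ, true_and, Finset.nonempty_iff_ne_empty]

lemma mem_ESet {𝒟 : Finset (Finset (Fin s))} {j₀ : Fin s} {E : Finset (Fin s)} :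
    E ∈ ESet 𝒟 j₀ ↔ (E.Nonempty ∧ j₀ ∉ E) ∧ E ∉ 𝒟 ∧ Eᶜ ∉ 𝒟 := by
  rw [ESet, Finset.mem_filter, mem_baseSet]

lemma card_baseSet (j₀ : Fin s) : (baseSet s j₀).card = 2 ^ (s - 1) - 1 := by
  rw [baseSet, Finset.card_erase_of_mem (Finset.empty_mem_powerset _),
    Finset.card_powerset, Finset.card_erase_of_mem (Finset.mem_univ _)]
  simp

lemma card_ESet {𝒟 : Finset (Finset (Fin s))} (h𝒟 : Admissible s 𝒟) (j₀ : Fin s)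
    (hs : 2 ≤ s) :
    (ESet 𝒟 j₀).card = 2 ^ (s - 1) - 1 - 𝒟.card ∧ 𝒟.card ≤ 2 ^ (s - 1) - 1 := by
  obtain ⟨hDemp, hDu, hDc⟩ := h𝒟
  classical
  set φ : Finset (Fin s) → Finset (Fin s) := fun D => if j₀ ∈ D then Dᶜ else D with hφ
  have himsub : 𝒟.image φ ⊆ baseSet s j₀ := by
    intro E hE
    obtain ⟨D, hD, rfl⟩ := Finset.mem_image.1 hE
    rw [mem_baseSet]
    by_cases hj : j₀ ∈ D
    · simp only [hφ, if_pos hj]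
      constructor
      · rw [Finset.nonempty_iff_ne_empty]
        intro h
        rw [Finset.compl_eq_empty_iff] at h
        exact hDu (h ▸ hD)
      · simp [hj]
    · simp only [hφ, if_neg hj]
      exact ⟨Finset.nonempty_iff_ne_empty.2 (fun h => hDemp (h ▸ hD)), hj⟩
  have hφinj : Set.InjOn φ ↑𝒟 := by
    intro D hD D' hD' heq
    simp only [hφ] at heq
    by_cases h1 : j₀ ∈ D <;> by_cases h2 : j₀ ∈ D' <;>
      simp only [h1, h2, if_true, if_false] at heq
    · exact compl_injective heq
    · exact absurd (show Dᶜ ∈ 𝒟 from heq.symm ▸ Finset.mem_coe.1 hD') (hDc D (Finset.mem_coe.1 hD))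
    · exact absurd (show D'ᶜ ∈ 𝒟 from heq ▸ Finset.mem_coe.1 hD) (hDc D' (Finset.mem_coe.1 hD'))
    · exact heq
  have himage : ESet 𝒟 j₀ = baseSet s j₀ \ 𝒟.image φ := by
    ext E
    rw [mem_ESet, Finset.mem_sdiff, mem_baseSet]
    constructor
    · rintro ⟨hb, hE1, hE2⟩
      refine ⟨hb, ?_⟩
      intro hmem
      obtain ⟨D, hD, hDE⟩ := Finset.mem_image.1 hmem
      by_cases hj : j₀ ∈ D
      · simp only [hφ, hj, if_true] at hDE
        exact hE2 (by rw [← hDE, compl_compl]; exact hD)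
      · simp only [hφ, hj, if_false] at hDE
        exact hE1 (hDE ▸ hD)
    · rintro ⟨hb, hnm⟩
      refine ⟨hb, ?_, ?_⟩
      · intro hE
        apply hnm
        refine Finset.mem_image.2 ⟨E, hE, ?_⟩
        simp [hφ, hb.2]
      · intro hE
        apply hnm
        refine Finset.mem_image.2 ⟨Eᶜ, hE, ?_⟩
        have : j₀ ∈ Eᶜ := by simp [hb.2]
        simp [hφ, this]
  have hcardim : (𝒟.image φ).card = 𝒟.card := Finset.card_image_of_injOn hφinj
  constructor
  · rw [himage, Finset.card_sdiff_of_subset himsub, hcardim, card_baseSet]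
  · rw [← card_baseSet (s := s) j₀, ← hcardim]
    exact Finset.card_le_card himsub

end S17

namespace S17
variable {s n : ℕ}

lemma D_nonempty {𝒟 : Finset (Finset (Fin s))} (h𝒟 : Admissible s 𝒟) {D : Finset (Fin s)}
    (hD : D ∈ 𝒟) : D.Nonempty :=
  Finset.nonempty_iff_ne_empty.2 (fun h => h𝒟.1 (h ▸ hD))

lemma D_ne_univ {𝒟 : Finset (Finset (Fin s))} (h𝒟 : Admissible s 𝒟) {D : Finset (Fin s)}
    (hD : D ∈ 𝒟) : D ≠ Finset.univ := fun h => h𝒟.2.1 (h ▸ hD)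

lemma exists_moved {ρ : Equiv.Perm (Fin n)} (hρ : ρ ≠ 1) : ∃ i, ρ i ≠ i := by
  by_contra h; push_neg at h; exact hρ (Equiv.ext h)

lemma card_F1set {A : Fin n → Fin s → Fin n} (hA : Feasible A)
    {𝒟 : Finset (Finset (Fin s))} (h𝒟 : Admissible s 𝒟) :
    (F1set A 𝒟).card = 𝒟.card * (Nat.factorial n - 1) := by
  have hinj : Set.InjOn (fun q : Finset (Fin s) × Equiv.Perm (Fin n) => vecSet (pD A q.1 q.2))
      ↑(𝒟 ×ˢ (Finset.univ.erase (1 : Equiv.Perm (Fin n)))) := by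
    rintro ⟨D, ρ⟩ hq ⟨D', ρ'⟩ hq' heq
    simp only [Finset.coe_product, Set.mem_prod, Finset.mem_coe, Finset.mem_erase,
      Finset.mem_univ, and_true] at hq hq'
    obtain ⟨hD, hρ⟩ := hq
    obtain ⟨hD', hρ'⟩ := hq'
    rcases pD_vecSet_eq hA (D_nonempty h𝒟 hD) (D_ne_univ h𝒟 hD) (D_nonempty h𝒟 hD')
        (D_ne_univ h𝒟 hD') hρ hρ' heq with ⟨h1, h2⟩ | ⟨h1, _⟩
    · simp [Prod.ext_iff, h1, h2]
    · exact absurd (show D'ᶜ ∈ 𝒟 from h1 ▸ hD) (h𝒟.2.2 D' hD')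
  rw [F1set, Finset.card_image_of_injOn hinj, Finset.card_product,
    Finset.card_erase_of_mem (Finset.mem_univ _), Finset.card_univ, Fintype.card_perm,
    Fintype.card_fin]

lemma ne_univ_of_not_mem {E : Finset (Fin s)} {j₀ : Fin s} (h : j₀ ∉ E) :
    E ≠ Finset.univ := fun he => h (he ▸ Finset.mem_univ j₀)

lemma card_F2set {A : Fin n → Fin s → Fin n} (hA : Feasible A)
    {𝒟 : Finset (Finset (Fin s))} (j₀ : Fin s) :
    (F2set A 𝒟 j₀).card = Nat.choose n 2 * (ESet 𝒟 j₀).card := by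
  have hinj : Set.InjOn
      (fun q : (Fin n × Fin n) × Finset (Fin s) => vecSet (Bab A q.1.1 q.1.2 q.2))
      ↑(Pset n ×ˢ ESet 𝒟 j₀) := by
    rintro ⟨⟨a, b⟩, E⟩ hq ⟨⟨a', b'⟩, E'⟩ hq' heq
    simp only [Finset.coe_product, Set.mem_prod, Finset.mem_coe] at hq hq'
    obtain ⟨hab, hE⟩ := hq
    obtain ⟨hab', hE'⟩ := hq'
    rw [Pset, Finset.mem_filter] at hab hab'
    rw [mem_ESet] at hE hE'
    obtain ⟨⟨hEne, hEj⟩, -⟩ := hE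
    obtain ⟨⟨hEne', hEj'⟩, -⟩ := hE'
    obtain ⟨hor, hEE⟩ := Bab_vecSet_inj hA (ne_of_lt hab.2) (ne_of_lt hab'.2)
      hEne hEne' hEj hEj' heq
    rcases hor with ⟨h1, h2⟩ | ⟨h1, h2⟩
    · simp only [Prod.ext_iff, hEE, and_true]
      exact ⟨h1, h2⟩
    · exfalso
      have x1 : a < b := hab.2
      have x2 : a' < b' := hab'.2
      have hba : b = a' := h2
      have hab2 : a = b' := h1
      rw [hba] at x1
      rw [← hab2] at x2
      exact lt_irrefl a (x1.trans x2)
  rw [F2set, Finset.card_image_of_injOn hinj, Finset.card_product, ← card_lt_pairs n, Pset]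

lemma vecSetA_not_F1 {A : Fin n → Fin s → Fin n} (hA : Feasible A)
    {𝒟 : Finset (Finset (Fin s))} (h𝒟 : Admissible s 𝒟) :
    vecSet A ∉ F1set A 𝒟 := by
  intro h
  obtain ⟨⟨D, ρ⟩, hq, heq⟩ := Finset.mem_image.1 h
  rw [Finset.mem_product, Finset.mem_erase] at hq
  obtain ⟨i, hi⟩ := exists_moved hq.2.1
  have hmem : pD A D ρ i ∈ vecSet (pD A D ρ) := mem_vecSet.2 ⟨i, rfl⟩
  rw [heq] at hmem
  exact pD_not_mem hA (D_nonempty h𝒟 hq.1) (D_ne_univ h𝒟 hq.1) hi hmem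

lemma vecSetA_not_F2 {A : Fin n → Fin s → Fin n} (hA : Feasible A)
    {𝒟 : Finset (Finset (Fin s))} {j₀ : Fin s} :
    vecSet A ∉ F2set A 𝒟 j₀ := by
  intro h
  obtain ⟨⟨⟨a, b⟩, E⟩, hq, heq⟩ := Finset.mem_image.1 h
  rw [Finset.mem_product] at hq
  have habP : a < b := (Finset.mem_filter.1 (by exact hq.1 : (a, b) ∈ Pset n)).2
  obtain ⟨⟨hEne, hEj⟩, -, -⟩ := mem_ESet.1 hq.2
  have hmem : Bab A a b E a ∈ vecSet (Bab A a b E) := mem_vecSet.2 ⟨a, rfl⟩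
  rw [heq] at hmem
  exact Bab_not_mem hA (ne_of_lt habP) hEne hEj hmem

lemma disjoint_F1_F2 {A : Fin n → Fin s → Fin n} (hA : Feasible A)
    {𝒟 : Finset (Finset (Fin s))} (h𝒟 : Admissible s 𝒟) {j₀ : Fin s} :
    Disjoint (F1set A 𝒟) (F2set A 𝒟 j₀) := by
  rw [Finset.disjoint_left]
  intro S h1 h2
  obtain ⟨⟨D, ρ⟩, hq, heq⟩ := Finset.mem_image.1 h1
  obtain ⟨⟨⟨a, b⟩, E⟩, hq', heq'⟩ := Finset.mem_image.1 h2
  rw [Finset.mem_product, Finset.mem_erase] at hq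
  rw [Finset.mem_product] at hq'
  have habP := (Finset.mem_filter.1 hq'.1).2
  have hab : a ≠ b := ne_of_lt habP
  obtain ⟨⟨hEne, hEj⟩, hE1, hE2⟩ := mem_ESet.1 hq'.2
  have heq2 : vecSet (pD A D ρ) = vecSet (pD A E (Equiv.swap a b)) := by
    rw [heq, ← heq', pD_swap]
  have hswap : Equiv.swap a b ≠ 1 := fun h => hab (Equiv.swap_eq_one_iff.1 h)
  rcases pD_vecSet_eq hA (D_nonempty h𝒟 hq.1) (D_ne_univ h𝒟 hq.1) hEne
      (ne_univ_of_not_mem hEj) hq.2.1 hswap heq2 with ⟨h3, _⟩ | ⟨h3, _⟩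
  · exact hE1 (h3 ▸ hq.1)
  · exact hE2 (h3 ▸ hq.1)

end S17
namespace S17
variable {s n : ℕ}

lemma union_eq {A : Fin n → Fin s → Fin n} (hA : Feasible A)
    {𝒟 : Finset (Finset (Fin s))} (h𝒟 : Admissible s 𝒟) (h𝒟ne : 𝒟.Nonempty) (j₀ : Fin s) :
    NDV A 𝒟 ∪ Nkopt A j₀ 2 =
      ↑(insert (vecSet A) (F1set A 𝒟 ∪ F2set A 𝒟 j₀)) := by
  apply Set.Subset.antisymm
  · rintro S (hS | hS)
    · obtain ⟨D, hD, ρ, rfl⟩ := hS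
      by_cases hρ : ρ = 1
      · subst hρ
        rw [pD_one]
        exact Finset.mem_coe.2 (Finset.mem_insert_self _ _)
      · refine Finset.mem_coe.2 (Finset.mem_insert_of_mem (Finset.mem_union_left _ ?_))
        exact Finset.mem_image.2 ⟨(D, ρ), Finset.mem_product.2
          ⟨hD, Finset.mem_erase.2 ⟨hρ, Finset.mem_univ _⟩⟩, rfl⟩
    · simp only [Nkopt, Set.mem_iUnion] at hS
      obtain ⟨I, hI, hSW⟩ := hS
      obtain ⟨a, b, E, hab, hj₀E, rfl⟩ := W_char hA hI hSW
      obtain ⟨c, d, hcd, hBeq⟩ : ∃ c d, c < d ∧ Bab A a b E = Bab A c d E := by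
        rcases lt_or_gt_of_ne hab with h | h
        · exact ⟨a, b, h, rfl⟩
        · exact ⟨b, a, h, Bab_comm A hab E⟩
      rw [hBeq]
      by_cases hE0 : E = ∅
      · subst hE0
        rw [Bab_empty]
        exact Finset.mem_coe.2 (Finset.mem_insert_self _ _)
      have hEne : E.Nonempty := Finset.nonempty_iff_ne_empty.2 hE0
      have hcd' : c ≠ d := ne_of_lt hcd
      have hswap : Equiv.swap c d ≠ 1 := fun h => hcd' (Equiv.swap_eq_one_iff.1 h)
      by_cases hED : E ∈ 𝒟
      · refine Finset.mem_coe.2 (Finset.mem_insert_of_mem (Finset.mem_union_left _ ?_))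
        rw [← pD_swap]
        exact Finset.mem_image.2 ⟨(E, Equiv.swap c d), Finset.mem_product.2
          ⟨hED, Finset.mem_erase.2 ⟨hswap, Finset.mem_univ _⟩⟩, rfl⟩
      by_cases hEDc : Eᶜ ∈ 𝒟
      · refine Finset.mem_coe.2 (Finset.mem_insert_of_mem (Finset.mem_union_left _ ?_))
        have h1 : Bab A c d E = Bab A c d Eᶜᶜ := by rw [compl_compl]
        rw [h1, Bab_compl A hcd', vecSet_comp, ← pD_swap]
        exact Finset.mem_image.2 ⟨(Eᶜ, Equiv.swap c d), Finset.mem_product.2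
          ⟨hEDc, Finset.mem_erase.2 ⟨hswap, Finset.mem_univ _⟩⟩, rfl⟩
      · refine Finset.mem_coe.2 (Finset.mem_insert_of_mem (Finset.mem_union_right _ ?_))
        refine Finset.mem_image.2 ⟨((c, d), E), Finset.mem_product.2 ⟨?_, ?_⟩, rfl⟩
        · rw [Pset, Finset.mem_filter]
          exact ⟨Finset.mem_univ _, hcd⟩
        · exact mem_ESet.2 ⟨⟨hEne, hj₀E⟩, hED, hEDc⟩
  · intro S hS
    rcases Finset.mem_insert.1 (Finset.mem_coe.1 hS) with rfl | hS'
    · left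
      obtain ⟨D0, hD0⟩ := h𝒟ne
      exact ⟨D0, hD0, 1, by rw [pD_one]⟩
    rcases Finset.mem_union.1 hS' with h1 | h2
    · left
      obtain ⟨⟨D, ρ⟩, hq, rfl⟩ := Finset.mem_image.1 h1
      exact ⟨D, (Finset.mem_product.1 hq).1, ρ, rfl⟩
    · right
      obtain ⟨⟨⟨a, b⟩, E⟩, hq, rfl⟩ := Finset.mem_image.1 h2
      rw [Finset.mem_product] at hq
      have habP : a < b := (Finset.mem_filter.1 (show (a, b) ∈ Pset n from hq.1)).2
      obtain ⟨⟨hEne, hEj⟩, -, -⟩ := mem_ESet.1 hq.2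
      simp only [Nkopt, Set.mem_iUnion]
      exact ⟨{a, b}, Finset.card_pair (ne_of_lt habP), Bab_mem_W hA (ne_of_lt habP) hEj⟩

lemma arith (d k m w : ℕ) (h : d ≤ m) :
    d * w + k * (m - d) + 1 = 1 + d * w + k * m - d * k := by
  obtain ⟨e, rfl⟩ := Nat.exists_eq_add_of_le h
  rw [Nat.add_sub_cancel_left, Nat.mul_add, Nat.mul_comm d k]
  generalize k * d = x
  generalize k * e = y
  generalize d * w = z
  omega

end S17

theorem stmt_17 (s n : ℕ) (hs : 2 ≤ s) (hn : 2 ≤ n)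
    (A : Fin n → Fin s → Fin n) (hA : Feasible A)
    (𝒟 : Finset (Finset (Fin s))) (h𝒟 : Admissible s 𝒟) (h𝒟ne : 𝒟.Nonempty)
    (j₀ : Fin s) :
    (NDV A 𝒟 ∪ Nkopt A j₀ 2).ncard =
      1 + 𝒟.card * (Nat.factorial n - 1) + Nat.choose n 2 * (2 ^ (s - 1) - 1)
        - 𝒟.card * Nat.choose n 2 := by
  rw [S17.union_eq hA h𝒟 h𝒟ne j₀, Set.ncard_coe_finset]
  have h1 : vecSet A ∉ S17.F1set A 𝒟 ∪ S17.F2set A 𝒟 j₀ := by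
    rw [Finset.mem_union]
    rintro (h | h)
    · exact S17.vecSetA_not_F1 hA h𝒟 h
    · exact S17.vecSetA_not_F2 hA h
  obtain ⟨hE, hdle⟩ := S17.card_ESet h𝒟 j₀ hs
  rw [Finset.card_insert_of_notMem h1,
    Finset.card_union_of_disjoint (S17.disjoint_F1_F2 hA h𝒟),
    S17.card_F1set hA h𝒟, S17.card_F2set hA j₀, hE,
    S17.arith _ _ _ _ hdle]
end

section
/- Let A be a feasible assignment with distinguished dimension j₀ ∈ Fin s and n ≥ 2. Then every element of the 2-opt neighborhood N₂opt(A) is the set of vectors of p_D(A,ρ) for some D ⊆ (Fin s) \ {j₀} and some permutation ρ of Fin n that is either the identity or a transposition. Consequently N₂opt(A) ⊆ N_full(A), where N_full(A) = { set of vectors of p_D(A,ρ) : ∅ ≠ D ⊊ Fin s, ρ a permutation of Fin n }, and therefore N_full(A) ∪ N₂opt(A) = N_full(A). -/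
/-- The full dimensionwise neighborhood: all `p_D(A,ρ)` with `∅ ≠ D ⊊ Fin s`. -/
def Nfull {s n : ℕ} (A : Fin n → Fin s → Fin n) : Set (Finset (Fin s → Fin n)) :=
  {S | ∃ D : Finset (Fin s), D ≠ ∅ ∧ D ≠ Finset.univ ∧
    ∃ ρ : Equiv.Perm (Fin n), S = vecSet (pD A D ρ)}

theorem stmt_18 (s n : ℕ) (hs : 2 ≤ s) (hn : 2 ≤ n)
    (A : Fin n → Fin s → Fin n) (hA : Feasible A) (j₀ : Fin s) :
    (∀ S ∈ Nkopt A j₀ 2, ∃ D : Finset (Fin s), D ⊆ ({j₀} : Finset (Fin s))ᶜ ∧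
      ∃ ρ : Equiv.Perm (Fin n),
        (ρ = 1 ∨ ∃ i i' : Fin n, i ≠ i' ∧ ρ = Equiv.swap i i') ∧
        S = vecSet (pD A D ρ)) ∧
    Nkopt A j₀ 2 ⊆ Nfull A ∧
    Nfull A ∪ Nkopt A j₀ 2 = Nfull A := by
  have main : ∀ S ∈ Nkopt A j₀ 2, ∃ D : Finset (Fin s), D ⊆ ({j₀} : Finset (Fin s))ᶜ ∧
      ∃ ρ : Equiv.Perm (Fin n),
        (ρ = 1 ∨ ∃ i i' : Fin n, i ≠ i' ∧ ρ = Equiv.swap i i') ∧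
        S = vecSet (pD A D ρ) := by
    intro S hS
    simp only [Nkopt, Set.mem_iUnion] at hS
    obtain ⟨I, hI, hSW⟩ := hS
    obtain ⟨a, b, hab, rfl⟩ := Finset.card_eq_two.mp hI
    obtain ⟨A', hA', hvs, hj0, hperm⟩ := hSW
    set D : Finset (Fin s) := Finset.univ.filter (fun j => A' a j ≠ A a j) with hD
    have hj₀D : j₀ ∉ D := by simp [hD, hj0 a]
    have key : ∀ j, j ≠ j₀ →
        ((j ∈ D → A' a j = A b j ∧ A' b j = A a j) ∧
         (j ∉ D → A' a j = A a j ∧ A' b j = A b j) ∧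
         ∀ i, i ≠ a → i ≠ b → A' i j = A i j) := by
      intro j hj
      obtain ⟨ρ, hfix, heq⟩ := hperm j hj
      have hmem : ∀ x : Fin n, x ∉ ({a, b} : Finset (Fin n)) → ρ x = x := hfix
      have hρa : ρ a = a ∨ ρ a = b := by
        by_contra h
        push_neg at h
        have h1 : ρ a ∉ ({a, b} : Finset (Fin n)) := by
          simp [h.1, h.2]
        have h2 := hmem (ρ a) h1
        have := ρ.injective h2
        exact h.1 this
      have hfixo : ∀ i, i ≠ a → i ≠ b → A' i j = A i j := by
        intro i hia hib
        rw [heq i, hmem i (by simp [hia, hib])]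
      rcases hρa with ha | ha
      · have hb : ρ b = b := by
          by_contra h
          have hρb : ρ b = a ∨ ρ b = b := by
            by_contra h'
            push_neg at h'
            have h1 : ρ b ∉ ({a, b} : Finset (Fin n)) := by simp [h'.1, h'.2]
            have h2 := hmem (ρ b) h1
            exact h'.2 (ρ.injective h2)
          rcases hρb with h' | h'
          · exact absurd (ρ.injective (h'.trans ha.symm)) hab.symm
          · exact h h'
        refine ⟨?_, fun _ => ⟨by rw [heq a, ha], by rw [heq b, hb]⟩, hfixo⟩
        intro hjD
        exfalso
        rw [hD, Finset.mem_filter] at hjD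
        exact hjD.2 (by rw [heq a, ha])
      · have hb : ρ b = a := by
          have hρb : ρ b = a ∨ ρ b = b := by
            by_contra h'
            push_neg at h'
            have h1 : ρ b ∉ ({a, b} : Finset (Fin n)) := by simp [h'.1, h'.2]
            have h2 := hmem (ρ b) h1
            exact h'.2 (ρ.injective h2)
          rcases hρb with h' | h'
          · exact h'
          · exact absurd (ρ.injective (ha.trans h'.symm)) hab
        have he1 : A' a j = A b j := by rw [heq a, ha]
        have he2 : A' b j = A a j := by rw [heq b, hb]
        refine ⟨fun _ => ⟨he1, he2⟩, ?_, hfixo⟩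
        intro hjD
        exfalso
        apply hjD
        rw [hD, Finset.mem_filter]
        refine ⟨Finset.mem_univ _, ?_⟩
        rw [he1]
        intro h
        exact hab.symm (hA j h)
    have hA'eq : A' = pD A D (Equiv.swap a b) := by
      funext i j
      simp only [pD, swapVec]
      by_cases hjD : j ∈ D
      · have hj : j ≠ j₀ := fun h => hj₀D (h ▸ hjD)
        simp only [hjD, if_true]
        by_cases hia : i = a
        · subst hia; rw [Equiv.swap_apply_left]; exact ((key j hj).1 hjD).1
        by_cases hib : i = b
        · subst hib; rw [Equiv.swap_apply_right]; exact ((key j hj).1 hjD).2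
        · rw [Equiv.swap_apply_of_ne_of_ne hia hib]
          exact (key j hj).2.2 i hia hib
      · simp only [hjD, if_false]
        by_cases hj : j = j₀
        · subst hj; exact hj0 i
        by_cases hia : i = a
        · subst hia; exact ((key j hj).2.1 hjD).1
        by_cases hib : i = b
        · subst hib; exact ((key j hj).2.1 hjD).2
        · exact (key j hj).2.2 i hia hib
    refine ⟨D, ?_, Equiv.swap a b, Or.inr ⟨a, b, hab, rfl⟩, by rw [← hvs, hA'eq]⟩
    intro j hjD
    simp only [Finset.mem_compl, Finset.mem_singleton]
    intro h
    exact hj₀D (h ▸ hjD)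
  have hsub : Nkopt A j₀ 2 ⊆ Nfull A := by
    intro S hS
    obtain ⟨D, hDsub, ρ, hρ, hSeq⟩ := main S hS
    have hj₀D : j₀ ∉ D := fun h => by simpa using hDsub h
    by_cases hDe : D = ∅
    · -- S = vecSet A; use a singleton {j} with j ≠ j₀
      have : Nontrivial (Fin s) := by
        apply Fin.nontrivial_iff_two_le.mpr hs
      obtain ⟨j, hj⟩ := exists_ne j₀
      have hpe : pD A ∅ ρ = A := by
        funext i k
        simp [pD, swapVec]
      have hSA : S = vecSet A := by rw [hSeq, hDe, hpe]
      refine ⟨{j}, by simp, ?_, 1, ?_⟩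
      · intro h
        have hm : j₀ ∈ ({j} : Finset (Fin s)) := h ▸ Finset.mem_univ j₀
        exact hj (Finset.mem_singleton.mp hm).symm
      · rw [hSA, pD_one]
    · refine ⟨D, hDe, fun h => hj₀D (h ▸ Finset.mem_univ j₀), ρ, hSeq⟩
  exact ⟨main, hsub, Set.union_eq_self_of_subset_right hsub⟩
end

section
/- Let A be a feasible assignment and, for m ≥ 1, let N_{≤m}(A) = { set of vectors of p_D(A,ρ) : D ⊆ Fin s, 1 ≤ |D| ≤ m, ρ a permutation of Fin n }, and let N_full(A) = { set of vectors of p_D(A,ρ) : ∅ ≠ D ⊊ Fin s, ρ a permutation of Fin n }. Then: (i) if s = 3, N_{≤1}(A) = N_full(A); (ii) if s = 4, N_{≤2}(A) = N_full(A). -/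
/-- `Nle A m`: the dimensionwise neighborhood using all nonempty `D` with `|D| ≤ m`. -/
def Nle {s n : ℕ} (A : Fin n → Fin s → Fin n) (m : ℕ) : Set (Finset (Fin s → Fin n)) :=
  {S | ∃ D : Finset (Fin s), 1 ≤ D.card ∧ D.card ≤ m ∧
    ∃ ρ : Equiv.Perm (Fin n), S = vecSet (pD A D ρ)}

lemma vecSet_compl {s n : ℕ} (A : Fin n → Fin s → Fin n) (D : Finset (Fin s))
    (ρ : Equiv.Perm (Fin n)) : vecSet (pD A D ρ) = vecSet (pD A Dᶜ ρ⁻¹) := by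
  have h : ∀ i, pD A D ρ i = pD A Dᶜ ρ⁻¹ (ρ i) := by
    intro i
    funext j
    simp only [pD, swapVec, Finset.mem_compl, Equiv.Perm.inv_def, Equiv.symm_apply_apply]
    by_cases hj : j ∈ D <;> simp [hj]
  unfold vecSet
  ext v
  simp only [Finset.mem_image, Finset.mem_univ, true_and]
  constructor
  · rintro ⟨i, rfl⟩; exact ⟨ρ i, (h i).symm⟩
  · rintro ⟨i, rfl⟩; exact ⟨ρ⁻¹ i, by rw [h (ρ⁻¹ i), Equiv.Perm.inv_def, Equiv.apply_symm_apply]⟩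

theorem stmt_19 (s n : ℕ) (hs : 2 ≤ s) (hn : 1 ≤ n)
    (A : Fin n → Fin s → Fin n) (hA : Feasible A) :
    (s = 3 → Nle A 1 = Nfull A) ∧ (s = 4 → Nle A 2 = Nfull A) := by
  have key : ∀ m, m + 1 ≤ s → s ≤ 2 * m + 1 → Nle A m = Nfull A := by
    intro m hm1 hm2
    ext S
    constructor
    · rintro ⟨D, h1, h2, ρ, rfl⟩
      refine ⟨D, ?_, ?_, ρ, rfl⟩
      · intro h; simp [h] at h1
      · intro h; rw [h, Finset.card_univ, Fintype.card_fin] at h2; omega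
    · rintro ⟨D, h1, h2, ρ, rfl⟩
      have hc1 : 1 ≤ D.card := Finset.card_pos.mpr (Finset.nonempty_iff_ne_empty.mpr h1)
      have hc2 : D.card ≤ s - 1 := by
        have : D.card < s := by
          have := Finset.card_lt_card (Finset.lt_iff_ssubset.mp
            (lt_of_le_of_ne (Finset.subset_univ D) h2))
          simpa using this
        omega
      by_cases hD : D.card ≤ m
      · exact ⟨D, hc1, hD, ρ, rfl⟩
      · refine ⟨Dᶜ, ?_, ?_, ρ⁻¹, vecSet_compl A D ρ⟩ <;>
        · rw [Finset.card_compl, Fintype.card_fin]; omega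
  exact ⟨fun h => by subst h; exact key 1 (by norm_num) (by norm_num),
         fun h => by subst h; exact key 2 (by norm_num) (by norm_num)⟩
end
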